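/- arXiv:2306.03751 — 3 statements merged into one kernel-verified Lean document; each statement's English description precedes it below -/
import Mathlib

section
/- Assume c ≥ 0 and d ≥ 0 almost everywhere, let M > 0, let P be a Borel probability measure on L²(ℤ_p^N) × L²(ℤ_p^N), and let B = {f ∈ L²(ℤ_p^N) : ‖f‖₂ ≤ M}. Fix J₁, J₂ ∈ L²(ℤ_p^N), m, n ≥ 0, and φ_1, …, φ_m, θ_1, …, θ_n ∈ L²(ℤ_p^N), and define F : ℝ^m × ℝ^n → ℝ by F(s,t) = ∫_{B×B} exp(−E(v,h) + ⟨J₁ + Σ_{i=1}^m s_i φ_i, v⟩ + ⟨J₂ + Σ_{j=1}^n t_j θ_j, h⟩) dP(v,h). Then the iterated partial derivative ∂_{t_n} ⋯ ∂_{t_1} ∂_{s_m} ⋯ ∂_{s_1} F exists at (s,t) = (0,0) and equals ∫_{B×B} ∏_{i=1}^m ⟨φ_i, v⟩ ∏_{j=1}^n ⟨θ_j, h⟩ exp(−E(v,h) + ⟨J₁, v⟩ + ⟨J₂, h⟩) dP(v,h). (Taking J₁ = J₂ = 0 this expresses the (m+n)-point correlation functions as iterated functional derivatives of the generating functional.)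 -/
open MeasureTheory ENNReal Real

/-- The space `ℤ_p^N`. -/
abbrev PSpace (p : ℕ) [Fact p.Prime] (N : ℕ) := Fin N → ℤ_[p]

/-- `exp(-t)` for `t ∈ [0,∞]`, with `exp(-∞) := 0`. -/
noncomputable def expNeg (t : ℝ≥0∞) : ℝ := if t = ⊤ then 0 else Real.exp (-t.toReal)

/-- The Boltzmann weight `exp(−E(v,h))`, where the quartic terms of the energy functional are
interpreted as elements of `[0,∞]` and `exp(−∞) := 0`. -/
noncomputable def boltzmannWeight {p : ℕ} [Fact p.Prime] {N : ℕ}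
    [MeasurableSpace (PSpace p N)] (μ : Measure (PSpace p N))
    (a b c d : PSpace p N → ℝ) (w : PSpace p N × PSpace p N → ℝ)
    (v h : PSpace p N → ℝ) : ℝ :=
  Real.exp ((∫ x, a x * v x ∂μ) + (∫ x, b x * h x ∂μ) +
      ∫ x, ∫ y, h x * w (x, y) * v y ∂μ ∂μ) *
    expNeg ((∫⁻ x, ENNReal.ofReal (c x * v x ^ 4) ∂μ) +
      ∫⁻ x, ENNReal.ofReal (d x * h x ^ 4) ∂μ)

/-- Partial derivative in the `i`-th coordinate of the first block of variables. -/
noncomputable def pdFst {m n : ℕ} (i : Fin m) (F : (Fin m → ℝ) × (Fin n → ℝ) → ℝ) :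
    (Fin m → ℝ) × (Fin n → ℝ) → ℝ :=
  fun st => deriv (fun r => F (Function.update st.1 i r, st.2)) (st.1 i)

/-- Partial derivative in the `j`-th coordinate of the second block of variables. -/
noncomputable def pdSnd {m n : ℕ} (j : Fin n) (F : (Fin m → ℝ) × (Fin n → ℝ) → ℝ) :
    (Fin m → ℝ) × (Fin n → ℝ) → ℝ :=
  fun st => deriv (fun r => F (st.1, Function.update st.2 j r)) (st.2 j)

/-- The iterated partial derivative `∂_{t_n} ⋯ ∂_{t_1} ∂_{s_m} ⋯ ∂_{s_1} F`. -/
noncomputable def iterPD2 {m n : ℕ} (F : (Fin m → ℝ) × (Fin n → ℝ) → ℝ) :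
    (Fin m → ℝ) × (Fin n → ℝ) → ℝ :=
  (List.finRange n).foldl (fun G j => pdSnd j G)
    ((List.finRange m).foldl (fun G i => pdFst i G) F)


open Filter Topology

set_option linter.unusedSectionVars false
set_option synthInstance.maxHeartbeats 1000000
set_option maxHeartbeats 1000000


section Aux
variable {X : Type*} [MeasurableSpace X] {μ : Measure X} [IsProbabilityMeasure μ]

lemma inner_eq_integral (f g : Lp ℝ 2 μ) : (inner ℝ f g : ℝ) = ∫ x, f x * g x ∂μ := by
  rw [MeasureTheory.L2.inner_def]
  refine integral_congr_ae (Eventually.of_forall fun x => ?_)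
  simp [RCLike.inner_apply, mul_comm]

lemma l2_integrable_mul (f g : Lp ℝ 2 μ) : Integrable (fun x => f x * g x) μ := by
  simpa [RCLike.inner_apply] using MeasureTheory.L2.integrable_inner (𝕜 := ℝ) g f

lemma l2_abs_integral_mul_le (f g : Lp ℝ 2 μ) : |∫ x, f x * g x ∂μ| ≤ ‖f‖ * ‖g‖ := by
  rw [← inner_eq_integral]
  exact abs_real_inner_le_norm f g

lemma linfty_ae_bound (f : Lp ℝ ⊤ μ) : ∀ᵐ x ∂μ, |f x| ≤ ‖f‖ := by
  have h := MeasureTheory.ae_le_eLpNormEssSup (f := (f : X → ℝ)) (μ := μ)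
  have hne : eLpNormEssSup (f : X → ℝ) μ ≠ ⊤ := by
    have := MeasureTheory.Lp.eLpNorm_ne_top f
    rwa [eLpNorm_exponent_top] at this
  filter_upwards [h] with x hx
  have : ((‖f x‖₊ : ℝ≥0∞)).toReal ≤ (eLpNormEssSup (f : X → ℝ) μ).toReal :=
    ENNReal.toReal_mono hne hx
  simpa [MeasureTheory.Lp.norm_def, eLpNorm_exponent_top, Real.norm_eq_abs] using this

lemma l2_integral_abs_le [IsProbabilityMeasure μ] (f : Lp ℝ 2 μ) : ∫ x, |f x| ∂μ ≤ ‖f‖ := by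
  have h1 : ∫ x, |f x| ∂μ = (∫⁻ x, ‖f x‖ₑ ∂μ).toReal := by
    simpa [Real.norm_eq_abs] using
      MeasureTheory.integral_norm_eq_lintegral_enorm (MeasureTheory.Lp.aestronglyMeasurable f)
  rw [h1, MeasureTheory.Lp.norm_def, ← MeasureTheory.eLpNorm_one_eq_lintegral_enorm]
  refine ENNReal.toReal_mono (MeasureTheory.Lp.eLpNorm_ne_top f) ?_
  exact MeasureTheory.eLpNorm_le_eLpNorm_of_exponent_le
    (by norm_num) (MeasureTheory.Lp.aestronglyMeasurable f)


noncomputable def toL2 (f : Lp ℝ ⊤ μ) : Lp ℝ 2 μ :=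
  ((MeasureTheory.Lp.memLp f).mono_exponent le_top).toLp _

lemma coeFn_toL2 (f : Lp ℝ ⊤ μ) : (toL2 f : X → ℝ) =ᵐ[μ] f :=
  MeasureTheory.MemLp.coeFn_toLp _

lemma integral_linfty_mul (f : Lp ℝ ⊤ μ) (v : Lp ℝ 2 μ) :
    ∫ x, f x * v x ∂μ = (inner ℝ (toL2 f) v : ℝ) := by
  rw [inner_eq_integral]
  refine integral_congr_ae ?_
  filter_upwards [coeFn_toL2 f] with x hx
  rw [hx]

lemma abs_integral_linfty_mul_le (f : Lp ℝ ⊤ μ) (v : Lp ℝ 2 μ) :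
    |∫ x, f x * v x ∂μ| ≤ ‖toL2 f‖ * ‖v‖ := by
  rw [integral_linfty_mul]
  exact abs_real_inner_le_norm _ _

lemma continuous_integral_linfty_mul (f : Lp ℝ ⊤ μ) :
    Continuous (fun v : Lp ℝ 2 μ => ∫ x, f x * v x ∂μ) := by
  have : (fun v : Lp ℝ 2 μ => ∫ x, f x * v x ∂μ) = fun v => (inner ℝ (toL2 f) v : ℝ) :=
    funext fun v => integral_linfty_mul f v
  rw [this]
  exact Continuous.inner continuous_const continuous_id

end Aux
section Phi
variable {X : Type*} [MeasurableSpace X] {μ : Measure X} [IsProbabilityMeasure μ]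

/-- The bilinear interaction functional. -/
noncomputable def Phi (w : Lp ℝ ⊤ (μ.prod μ)) (v h : Lp ℝ 2 μ) : ℝ :=
  ∫ x, ∫ y, h x * w (x, y) * v y ∂μ ∂μ

lemma phi_aesm (w : Lp ℝ ⊤ (μ.prod μ)) (v h : Lp ℝ 2 μ) :
    AEStronglyMeasurable (fun z : X × X => h z.1 * w z * v z.2) (μ.prod μ) := by
  have h1 : AEStronglyMeasurable (fun z : X × X => h z.1) (μ.prod μ) :=
    (MeasureTheory.Lp.aestronglyMeasurable h).comp_quasiMeasurePreserving
      Measure.quasiMeasurePreserving_fst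
  have h2 : AEStronglyMeasurable (fun z : X × X => v z.2) (μ.prod μ) :=
    (MeasureTheory.Lp.aestronglyMeasurable v).comp_quasiMeasurePreserving
      Measure.quasiMeasurePreserving_snd
  exact (h1.mul (MeasureTheory.Lp.aestronglyMeasurable w)).mul h2

lemma phi_dom_integrable (w : Lp ℝ ⊤ (μ.prod μ)) (v h : Lp ℝ 2 μ) :
    Integrable (fun z : X × X => ‖w‖ * (|h z.1| * |v z.2|)) (μ.prod μ) := by
  have hh : Integrable (fun x => |h x|) μ :=
    ((MeasureTheory.Lp.memLp h).integrable (by norm_num)).abs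
  have hv : Integrable (fun x => |v x|) μ :=
    ((MeasureTheory.Lp.memLp v).integrable (by norm_num)).abs
  exact (hh.mul_prod hv).const_mul _

lemma phi_ae_bound (w : Lp ℝ ⊤ (μ.prod μ)) (v h : Lp ℝ 2 μ) :
    ∀ᵐ z ∂(μ.prod μ), ‖h z.1 * w z * v z.2‖ ≤ ‖w‖ * (|h z.1| * |v z.2|) := by
  filter_upwards [linfty_ae_bound w] with z hz
  rw [Real.norm_eq_abs, abs_mul, abs_mul]
  calc |h z.1| * |w z| * |v z.2| ≤ |h z.1| * ‖w‖ * |v z.2| := by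
        apply mul_le_mul_of_nonneg_right _ (abs_nonneg _)
        exact mul_le_mul_of_nonneg_left hz (abs_nonneg _)
    _ = ‖w‖ * (|h z.1| * |v z.2|) := by ring

lemma phi_integrable (w : Lp ℝ ⊤ (μ.prod μ)) (v h : Lp ℝ 2 μ) :
    Integrable (fun z : X × X => h z.1 * w z * v z.2) (μ.prod μ) :=
  (phi_dom_integrable w v h).mono' (phi_aesm w v h) (phi_ae_bound w v h)

lemma Phi_eq_prod (w : Lp ℝ ⊤ (μ.prod μ)) (v h : Lp ℝ 2 μ) :
    Phi w v h = ∫ z, h z.1 * w z * v z.2 ∂(μ.prod μ) :=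
  (MeasureTheory.integral_prod _ (phi_integrable w v h)).symm

lemma Phi_bound (w : Lp ℝ ⊤ (μ.prod μ)) (v h : Lp ℝ 2 μ) :
    |Phi w v h| ≤ ‖w‖ * (‖h‖ * ‖v‖) := by
  rw [Phi_eq_prod]
  calc |∫ z, h z.1 * w z * v z.2 ∂(μ.prod μ)|
      ≤ ∫ z, ‖w‖ * (|h z.1| * |v z.2|) ∂(μ.prod μ) := by
        rw [← Real.norm_eq_abs]
        exact MeasureTheory.norm_integral_le_of_norm_le (phi_dom_integrable w v h)
          (phi_ae_bound w v h)
    _ = ‖w‖ * ((∫ x, |h x| ∂μ) * ∫ y, |v y| ∂μ) := by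
        rw [MeasureTheory.integral_const_mul]
        congr 1
        exact MeasureTheory.integral_prod_mul (fun x => |(h : X → ℝ) x|) (fun y => |(v : X → ℝ) y|)
    _ ≤ ‖w‖ * (‖h‖ * ‖v‖) := by
        have h1 := l2_integral_abs_le h
        have h2 := l2_integral_abs_le v
        have h1' : (0:ℝ) ≤ ∫ x, |h x| ∂μ := integral_nonneg fun x => abs_nonneg _
        have h2' : (0:ℝ) ≤ ∫ x, |v x| ∂μ := integral_nonneg fun x => abs_nonneg _
        exact mul_le_mul_of_nonneg_left
          (mul_le_mul h1 h2 h2' (le_trans h1' h1)) (norm_nonneg _)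

lemma Phi_add_left (w : Lp ℝ ⊤ (μ.prod μ)) (v₁ v₂ h : Lp ℝ 2 μ) :
    Phi w (v₁ + v₂) h = Phi w v₁ h + Phi w v₂ h := by
  rw [Phi_eq_prod, Phi_eq_prod, Phi_eq_prod,
    ← MeasureTheory.integral_add (phi_integrable w v₁ h) (phi_integrable w v₂ h)]
  refine integral_congr_ae ?_
  filter_upwards [Measure.quasiMeasurePreserving_snd.ae_eq_comp
    (MeasureTheory.Lp.coeFn_add v₁ v₂)] with z hz
  have : ((v₁ + v₂ : Lp ℝ 2 μ) : X → ℝ) z.2 = v₁ z.2 + v₂ z.2 := by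
    simpa using hz
  rw [this]; ring

lemma Phi_add_right (w : Lp ℝ ⊤ (μ.prod μ)) (v h₁ h₂ : Lp ℝ 2 μ) :
    Phi w v (h₁ + h₂) = Phi w v h₁ + Phi w v h₂ := by
  rw [Phi_eq_prod, Phi_eq_prod, Phi_eq_prod,
    ← MeasureTheory.integral_add (phi_integrable w v h₁) (phi_integrable w v h₂)]
  refine integral_congr_ae ?_
  filter_upwards [Measure.quasiMeasurePreserving_fst.ae_eq_comp
    (MeasureTheory.Lp.coeFn_add h₁ h₂)] with z hz
  have : ((h₁ + h₂ : Lp ℝ 2 μ) : X → ℝ) z.1 = h₁ z.1 + h₂ z.1 := by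
    simpa using hz
  rw [this]; ring

lemma Phi_continuous (w : Lp ℝ ⊤ (μ.prod μ)) :
    Continuous (fun q : Lp ℝ 2 μ × Lp ℝ 2 μ => Phi w q.1 q.2) := by
  rw [continuous_iff_continuousAt]
  rintro ⟨v₀, h₀⟩
  have key : ∀ q : Lp ℝ 2 μ × Lp ℝ 2 μ, |Phi w q.1 q.2 - Phi w v₀ h₀| ≤
      ‖w‖ * (‖q.2 - h₀‖ * ‖q.1‖) + ‖w‖ * (‖h₀‖ * ‖q.1 - v₀‖) := by
    rintro ⟨v, h⟩
    have e1 : Phi w v h = Phi w v h₀ + Phi w v (h - h₀) := by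
      rw [← Phi_add_right]; congr 1; abel
    have e2 : Phi w v h₀ = Phi w v₀ h₀ + Phi w (v - v₀) h₀ := by
      rw [← Phi_add_left]; congr 1; abel
    have : Phi w v h - Phi w v₀ h₀ = Phi w v (h - h₀) + Phi w (v - v₀) h₀ := by
      rw [e1, e2]; ring
    rw [this]
    refine (abs_add_le _ _).trans ?_
    exact add_le_add (Phi_bound w v (h - h₀)) (Phi_bound w (v - v₀) h₀)
  rw [ContinuousAt, tendsto_iff_dist_tendsto_zero]
  refine squeeze_zero (g := fun q : Lp ℝ 2 μ × Lp ℝ 2 μ =>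
      ‖w‖ * (‖q.2 - h₀‖ * ‖q.1‖) + ‖w‖ * (‖h₀‖ * ‖q.1 - v₀‖))
      (fun q => dist_nonneg) (fun q => ?_) ?_
  · exact (le_of_eq (Real.dist_eq _ _)).trans (key q)
  · have hcont : Continuous (fun q : Lp ℝ 2 μ × Lp ℝ 2 μ =>
        ‖w‖ * (‖q.2 - h₀‖ * ‖q.1‖) + ‖w‖ * (‖h₀‖ * ‖q.1 - v₀‖)) := by
      have c1 : Continuous (fun q : Lp ℝ 2 μ × Lp ℝ 2 μ => ‖q.2 - h₀‖) :=
        (continuous_snd.sub continuous_const).norm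
      have c2 : Continuous (fun q : Lp ℝ 2 μ × Lp ℝ 2 μ => ‖q.1‖) := continuous_fst.norm
      have c3 : Continuous (fun q : Lp ℝ 2 μ × Lp ℝ 2 μ => ‖q.1 - v₀‖) :=
        (continuous_fst.sub continuous_const).norm
      exact ((continuous_const.mul (c1.mul c2))).add
        (continuous_const.mul (continuous_const.mul c3))
    have := hcont.tendsto (v₀, h₀)
    simpa only [sub_self, norm_zero, mul_zero, zero_mul, add_zero] using this
end Phi
lemma expNeg_nonneg (t : ℝ≥0∞) : 0 ≤ expNeg t := by
  unfold expNeg; split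
  · exact le_refl _
  · exact (Real.exp_pos _).le

lemma expNeg_le_one (t : ℝ≥0∞) : expNeg t ≤ 1 := by
  unfold expNeg; split
  · exact zero_le_one
  · exact Real.exp_le_one_iff.mpr (neg_nonpos.mpr ENNReal.toReal_nonneg)

lemma measurable_expNeg : Measurable expNeg := by
  unfold expNeg
  refine Measurable.ite (MeasurableSet.singleton ⊤) measurable_const ?_
  exact (Real.continuous_exp.measurable).comp (ENNReal.measurable_toReal.neg)

section Psi
variable {X : Type*} [MeasurableSpace X] {μ : Measure X} [IsProbabilityMeasure μ]

lemma psi_lsc (e : X → ℝ) (he : AEMeasurable e μ) :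
    LowerSemicontinuous (fun v : Lp ℝ 2 μ => ∫⁻ x, ENNReal.ofReal (e x * v x ^ 4) ∂μ) := by
  rw [lowerSemicontinuous_iff_isClosed_preimage]
  intro y
  haveI : SequentialSpace (Lp ℝ 2 μ) := FrechetUrysohnSpace.to_sequentialSpace
  apply IsSeqClosed.isClosed
  intro vs v hvs hlim
  have hnorm : Tendsto (fun k => ‖vs k - v‖) atTop (𝓝 0) := by
    have := tendsto_iff_dist_tendsto_zero.mp hlim
    simpa [dist_eq_norm] using this
  have help : Tendsto (fun k => eLpNorm ((vs k : X → ℝ) - (v : X → ℝ)) 2 μ) atTop (𝓝 0) := by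
    have h1 : ∀ k, eLpNorm ((vs k : X → ℝ) - (v : X → ℝ)) 2 μ = eLpNorm ((vs k - v : Lp ℝ 2 μ) : X → ℝ) 2 μ :=
      fun k => (eLpNorm_congr_ae (MeasureTheory.Lp.coeFn_sub (vs k) v)).symm
    simp only [h1]
    rw [← ENNReal.tendsto_toReal_iff (fun k => MeasureTheory.Lp.eLpNorm_ne_top _) ENNReal.zero_ne_top]
    simpa [MeasureTheory.Lp.norm_def] using hnorm
  have htim : TendstoInMeasure μ (fun k => (vs k : X → ℝ)) atTop (v : X → ℝ) :=
    tendstoInMeasure_of_tendsto_eLpNorm (by norm_num)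
      (fun k => MeasureTheory.Lp.aestronglyMeasurable _)
      (MeasureTheory.Lp.aestronglyMeasurable _) help
  obtain ⟨ns, hns, hae⟩ := htim.exists_seq_tendsto_ae
  have hmeas : ∀ k : ℕ, AEMeasurable (fun x => ENNReal.ofReal (e x * (vs (ns k) : X → ℝ) x ^ 4)) μ :=
    fun k => ENNReal.measurable_ofReal.comp_aemeasurable
      (he.mul (((MeasureTheory.Lp.aestronglyMeasurable (vs (ns k))).aemeasurable).pow_const 4))
  have hfatou : (∫⁻ x, ENNReal.ofReal (e x * v x ^ 4) ∂μ)
      ≤ atTop.liminf fun k => ∫⁻ x, ENNReal.ofReal (e x * (vs (ns k) : X → ℝ) x ^ 4) ∂μ := by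
    have hcong : (fun x => ENNReal.ofReal (e x * v x ^ 4))
        =ᵐ[μ] fun x => atTop.liminf fun k => ENNReal.ofReal (e x * (vs (ns k) : X → ℝ) x ^ 4) := by
      filter_upwards [hae] with x hx
      have : Tendsto (fun k => ENNReal.ofReal (e x * (vs (ns k) : X → ℝ) x ^ 4)) atTop
          (𝓝 (ENNReal.ofReal (e x * v x ^ 4))) := by
        apply (ENNReal.continuous_ofReal.tendsto _).comp
        exact (hx.pow 4).const_mul (e x)
      exact this.liminf_eq.symm
    rw [lintegral_congr_ae hcong]
    exact lintegral_liminf_le' hmeas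
  refine hfatou.trans ?_
  have : ∀ k : ℕ, (∫⁻ x, ENNReal.ofReal (e x * (vs (ns k) : X → ℝ) x ^ 4) ∂μ) ≤ y :=
    fun k => hvs (ns k)
  calc atTop.liminf (fun k => ∫⁻ x, ENNReal.ofReal (e x * (vs (ns k) : X → ℝ) x ^ 4) ∂μ)
      ≤ atTop.liminf (fun _ : ℕ => y) := Filter.liminf_le_liminf (Eventually.of_forall this)
    _ = y := Filter.liminf_const y
end Psi
section KeyDeriv
variable {α : Type*} [MeasurableSpace α] (Q : Measure α) [IsFiniteMeasure Q]

lemma key_deriv (K A R : α → ℝ) (hK : AEStronglyMeasurable K Q)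
    (hA : AEStronglyMeasurable A Q) (hR : AEStronglyMeasurable R Q)
    {CK CA CR : ℝ}
    (hKb : ∀ᵐ f ∂Q, |K f| ≤ CK) (hAb : ∀ᵐ f ∂Q, |A f| ≤ CA) (hRb : ∀ᵐ f ∂Q, |R f| ≤ CR)
    (r₀ : ℝ) :
    HasDerivAt (fun r => ∫ f, K f * Real.exp (r * A f + R f) ∂Q)
      (∫ f, A f * K f * Real.exp (r₀ * A f + R f) ∂Q) r₀ := by
  have hKb' : ∀ᵐ f ∂Q, |K f| ≤ |CK| := hKb.mono fun f h => h.trans (le_abs_self _)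
  have hAb' : ∀ᵐ f ∂Q, |A f| ≤ |CA| := hAb.mono fun f h => h.trans (le_abs_self _)
  have hRb' : ∀ᵐ f ∂Q, |R f| ≤ |CR| := hRb.mono fun f h => h.trans (le_abs_self _)
  have hexp : ∀ r : ℝ, AEStronglyMeasurable (fun f => Real.exp (r * A f + R f)) Q :=
    fun r => Real.continuous_exp.comp_aestronglyMeasurable ((hA.const_mul r).add hR)
  have key := hasDerivAt_integral_of_dominated_loc_of_deriv_le
    (F := fun r f => K f * Real.exp (r * A f + R f))
    (F' := fun r f => A f * K f * Real.exp (r * A f + R f))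
    (bound := fun _ => |CA| * |CK| * Real.exp ((|r₀| + 1) * |CA| + |CR|))
    (μ := Q) (x₀ := r₀) (Metric.ball_mem_nhds r₀ one_pos)
    (Eventually.of_forall fun r => hK.mul (hexp r))
    ?_ ((hA.mul hK).mul (hexp r₀)) ?_ (integrable_const _) ?_
  · exact key.2
  · -- Integrable (F r₀)
    refine Integrable.mono' (integrable_const (|CK| * Real.exp (|r₀| * |CA| + |CR|)))
      (hK.mul (hexp r₀)) ?_
    filter_upwards [hKb', hAb', hRb'] with f h1 h2 h3
    rw [Real.norm_eq_abs, abs_mul, Real.abs_exp]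
    have harg : r₀ * A f + R f ≤ |r₀| * |CA| + |CR| := by
      have : r₀ * A f ≤ |r₀| * |CA| := by
        calc r₀ * A f ≤ |r₀ * A f| := le_abs_self _
          _ = |r₀| * |A f| := abs_mul _ _
          _ ≤ |r₀| * |CA| := mul_le_mul_of_nonneg_left h2 (abs_nonneg _)
      exact add_le_add this ((le_abs_self _).trans h3)
    exact mul_le_mul h1 (Real.exp_le_exp.mpr harg) (Real.exp_nonneg _) (abs_nonneg _)
  · -- bound on F'
    filter_upwards [hKb', hAb', hRb'] with f h1 h2 h3
    intro r hr
    rw [Real.norm_eq_abs, abs_mul, abs_mul, Real.abs_exp]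
    have hrabs : |r| ≤ |r₀| + 1 := by
      have := mem_ball_iff_norm.mp hr
      have h4 : |r - r₀| ≤ 1 := le_of_lt (by simpa [Real.norm_eq_abs] using this)
      have h5 : |r| ≤ |r₀| + |r - r₀| := by
        calc |r| = |r₀ + (r - r₀)| := by congr 1; ring
          _ ≤ |r₀| + |r - r₀| := abs_add_le _ _
      linarith
    have harg : r * A f + R f ≤ (|r₀| + 1) * |CA| + |CR| := by
      have : r * A f ≤ (|r₀| + 1) * |CA| := by
        calc r * A f ≤ |r * A f| := le_abs_self _
          _ = |r| * |A f| := abs_mul _ _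
          _ ≤ (|r₀| + 1) * |CA| :=
              mul_le_mul hrabs h2 (abs_nonneg _) (by positivity)
      exact add_le_add this ((le_abs_self _).trans h3)
    refine mul_le_mul (mul_le_mul h2 h1 (abs_nonneg _) (abs_nonneg _))
      (Real.exp_le_exp.mpr harg) (Real.exp_nonneg _) (by positivity)
  · -- differentiability
    refine Eventually.of_forall fun f => ?_
    intro r _
    have h1 : HasDerivAt (fun r : ℝ => r * A f + R f) (A f) r := by
      simpa using ((hasDerivAt_id r).mul_const (A f)).add_const (R f)
    have h2 := (h1.exp).const_mul (K f)
    exact h2.congr_deriv (by ring)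
end KeyDeriv
lemma abs_list_prod_le {ι : Type*} (L : List ι) (g C : ι → ℝ) (h : ∀ i, |g i| ≤ C i) :
    |(L.map g).prod| ≤ (L.map C).prod := by
  induction L with
  | nil => simp
  | cons i L ih =>
      simp only [List.map_cons, List.prod_cons, abs_mul]
      exact mul_le_mul (h i) ih (abs_nonneg _) ((abs_nonneg (g i)).trans (h i))

lemma list_prod_nonneg_of_abs {ι : Type*} (L : List ι) (g C : ι → ℝ) (h : ∀ i, |g i| ≤ C i) :
    0 ≤ (L.map C).prod :=
  List.prod_nonneg (by
    intro x hx
    obtain ⟨i, _, rfl⟩ := List.mem_map.mp hx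
    exact (abs_nonneg (g i)).trans (h i))
lemma sum_update_mul {ι : Type*} [Fintype ι] [DecidableEq ι]
    (s : ι → ℝ) (i : ι) (r : ℝ) (g : ι → ℝ) :
    (∑ i', Function.update s i r i' * g i')
      = r * g i + ∑ i' ∈ Finset.univ.erase i, s i' * g i' := by
  have h : (fun i' => Function.update s i r i' * g i')
      = Function.update (fun i' => s i' * g i') i (r * g i) := by
    funext x
    rcases eq_or_ne x i with rfl | hx
    · simp
    · simp [Function.update_of_ne hx]
  rw [h, Finset.sum_update_of_mem (Finset.mem_univ i), Finset.sdiff_singleton_eq_erase]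

section Fold
variable {α : Type*} [MeasurableSpace α] (Q : Measure α) [IsFiniteMeasure Q]
variable {m n : ℕ} (A : Fin m → α → ℝ) (B : Fin n → α → ℝ) (CA : Fin m → ℝ) (CB : Fin n → ℝ)

lemma pd_fst_step
    (hA : ∀ i, AEStronglyMeasurable (A i) Q) (hB : ∀ j, AEStronglyMeasurable (B j) Q)
    (hAb : ∀ i, ∀ᵐ f ∂Q, |A i f| ≤ CA i) (hBb : ∀ j, ∀ᵐ f ∂Q, |B j f| ≤ CB j)
    (K : α → ℝ) (CK : ℝ) (hK : AEStronglyMeasurable K Q) (hKb : ∀ᵐ f ∂Q, |K f| ≤ CK)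
    (i : Fin m) :
    pdFst i (fun st : (Fin m → ℝ) × (Fin n → ℝ) =>
        ∫ f, K f * Real.exp ((∑ i', st.1 i' * A i' f) + ∑ j, st.2 j * B j f) ∂Q)
    = fun st => ∫ f, (A i f * K f) *
        Real.exp ((∑ i', st.1 i' * A i' f) + ∑ j, st.2 j * B j f) ∂Q := by
  funext st
  set R : α → ℝ := fun f =>
    (∑ i' ∈ Finset.univ.erase i, st.1 i' * A i' f) + ∑ j, st.2 j * B j f with hRdef
  have hRm : AEStronglyMeasurable R Q := by
    apply AEStronglyMeasurable.add
    · exact Finset.aestronglyMeasurable_fun_sum _ (fun i' _ => (hA i').const_mul _)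
    · exact Finset.aestronglyMeasurable_fun_sum _ (fun j _ => (hB j).const_mul _)
  have hAall : ∀ᵐ f ∂Q, ∀ i', |A i' f| ≤ CA i' := ae_all_iff.mpr hAb
  have hBall : ∀ᵐ f ∂Q, ∀ j, |B j f| ≤ CB j := ae_all_iff.mpr hBb
  have hRb : ∀ᵐ f ∂Q, |R f| ≤ (∑ i', |st.1 i'| * |CA i'|) + ∑ j, |st.2 j| * |CB j| := by
    filter_upwards [hAall, hBall] with f h1 h2
    refine (abs_add_le _ _).trans (add_le_add ?_ ?_)
    · calc |∑ i' ∈ Finset.univ.erase i, st.1 i' * A i' f|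
          ≤ ∑ i' ∈ Finset.univ.erase i, |st.1 i' * A i' f| := Finset.abs_sum_le_sum_abs _ _
        _ ≤ ∑ i' ∈ Finset.univ.erase i, |st.1 i'| * |CA i'| := by
            refine Finset.sum_le_sum fun i' _ => ?_
            rw [abs_mul]
            exact mul_le_mul_of_nonneg_left ((h1 i').trans (le_abs_self _)) (abs_nonneg _)
        _ ≤ ∑ i', |st.1 i'| * |CA i'| := by
            refine Finset.sum_le_sum_of_subset_of_nonneg (Finset.subset_univ _) ?_
            intro i' _ _
            positivity
    · calc |∑ j, st.2 j * B j f| ≤ ∑ j, |st.2 j * B j f| := Finset.abs_sum_le_sum_abs _ _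
        _ ≤ ∑ j, |st.2 j| * |CB j| := by
            refine Finset.sum_le_sum fun j _ => ?_
            rw [abs_mul]
            exact mul_le_mul_of_nonneg_left ((h2 j).trans (le_abs_self _)) (abs_nonneg _)
  have hder := key_deriv Q K (A i) R hK (hA i) hRm hKb (hAb i) hRb (st.1 i)
  have hsum : ∀ f, (∑ i', st.1 i' * A i' f)
      = st.1 i * A i f + ∑ i' ∈ Finset.univ.erase i, st.1 i' * A i' f := by
    intro f
    have h := sum_update_mul st.1 i (st.1 i) (fun i' => A i' f)
    rwa [Function.update_eq_self] at h
  simp only [pdFst]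
  have hfun : (fun r => ∫ f, K f *
        Real.exp ((∑ i', Function.update st.1 i r i' * A i' f) + ∑ j, st.2 j * B j f) ∂Q)
      = fun r => ∫ f, K f * Real.exp (r * A i f + R f) ∂Q := by
    funext r
    refine integral_congr_ae (Eventually.of_forall fun f => ?_)
    simp only [hRdef]
    congr 2
    rw [sum_update_mul]
    ring
  rw [hfun, hder.deriv]
  refine integral_congr_ae (Eventually.of_forall fun f => ?_)
  simp only [hRdef]
  rw [hsum f]
  congr 2
  ring

lemma fold_fst
    (hA : ∀ i, AEStronglyMeasurable (A i) Q) (hB : ∀ j, AEStronglyMeasurable (B j) Q)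
    (hAb : ∀ i, ∀ᵐ f ∂Q, |A i f| ≤ CA i) (hBb : ∀ j, ∀ᵐ f ∂Q, |B j f| ≤ CB j)
    (L : List (Fin m)) :
    ∀ (K : α → ℝ) (CK : ℝ), AEStronglyMeasurable K Q → (∀ᵐ f ∂Q, |K f| ≤ CK) →
    List.foldl (fun G i => pdFst i G)
      (fun st : (Fin m → ℝ) × (Fin n → ℝ) =>
        ∫ f, K f * Real.exp ((∑ i', st.1 i' * A i' f) + ∑ j, st.2 j * B j f) ∂Q) L
    = fun st => ∫ f, ((L.map (fun i => A i f)).prod * K f) *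
        Real.exp ((∑ i', st.1 i' * A i' f) + ∑ j, st.2 j * B j f) ∂Q := by
  induction L with
  | nil =>
      intro K CK hK hKb
      simp
  | cons i L ih =>
      intro K CK hK hKb
      rw [List.foldl_cons, pd_fst_step Q A B CA CB hA hB hAb hBb K CK hK hKb i,
        ih (fun f => A i f * K f) (|CA i| * |CK|) ((hA i).mul hK)
          (by
            filter_upwards [hAb i, hKb] with f h1 h2
            rw [abs_mul]
            exact mul_le_mul (h1.trans (le_abs_self _)) (h2.trans (le_abs_self _))
              (abs_nonneg _) (abs_nonneg _))]
      funext st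
      refine integral_congr_ae (Eventually.of_forall fun f => ?_)
      simp only [List.map_cons, List.prod_cons]
      ring
end Fold

section Fold2
variable {α : Type*} [MeasurableSpace α] (Q : Measure α) [IsFiniteMeasure Q]
variable {m n : ℕ} (A : Fin m → α → ℝ) (B : Fin n → α → ℝ) (CA : Fin m → ℝ) (CB : Fin n → ℝ)

lemma pd_snd_step
    (hA : ∀ i, AEStronglyMeasurable (A i) Q) (hB : ∀ j, AEStronglyMeasurable (B j) Q)
    (hAb : ∀ i, ∀ᵐ f ∂Q, |A i f| ≤ CA i) (hBb : ∀ j, ∀ᵐ f ∂Q, |B j f| ≤ CB j)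
    (K : α → ℝ) (CK : ℝ) (hK : AEStronglyMeasurable K Q) (hKb : ∀ᵐ f ∂Q, |K f| ≤ CK)
    (j : Fin n) :
    pdSnd j (fun st : (Fin m → ℝ) × (Fin n → ℝ) =>
        ∫ f, K f * Real.exp ((∑ i, st.1 i * A i f) + ∑ j', st.2 j' * B j' f) ∂Q)
    = fun st => ∫ f, (B j f * K f) *
        Real.exp ((∑ i, st.1 i * A i f) + ∑ j', st.2 j' * B j' f) ∂Q := by
  funext st
  set R : α → ℝ := fun f =>
    (∑ i, st.1 i * A i f) + ∑ j' ∈ Finset.univ.erase j, st.2 j' * B j' f with hRdef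
  have hRm : AEStronglyMeasurable R Q := by
    apply AEStronglyMeasurable.add
    · exact Finset.aestronglyMeasurable_fun_sum _ (fun i _ => (hA i).const_mul _)
    · exact Finset.aestronglyMeasurable_fun_sum _ (fun j' _ => (hB j').const_mul _)
  have hAall : ∀ᵐ f ∂Q, ∀ i, |A i f| ≤ CA i := ae_all_iff.mpr hAb
  have hBall : ∀ᵐ f ∂Q, ∀ j', |B j' f| ≤ CB j' := ae_all_iff.mpr hBb
  have hRb : ∀ᵐ f ∂Q, |R f| ≤ (∑ i, |st.1 i| * |CA i|) + ∑ j', |st.2 j'| * |CB j'| := by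
    filter_upwards [hAall, hBall] with f h1 h2
    refine (abs_add_le _ _).trans (add_le_add ?_ ?_)
    · calc |∑ i, st.1 i * A i f| ≤ ∑ i, |st.1 i * A i f| := Finset.abs_sum_le_sum_abs _ _
        _ ≤ ∑ i, |st.1 i| * |CA i| := by
            refine Finset.sum_le_sum fun i _ => ?_
            rw [abs_mul]
            exact mul_le_mul_of_nonneg_left ((h1 i).trans (le_abs_self _)) (abs_nonneg _)
    · calc |∑ j' ∈ Finset.univ.erase j, st.2 j' * B j' f|
          ≤ ∑ j' ∈ Finset.univ.erase j, |st.2 j' * B j' f| := Finset.abs_sum_le_sum_abs _ _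
        _ ≤ ∑ j' ∈ Finset.univ.erase j, |st.2 j'| * |CB j'| := by
            refine Finset.sum_le_sum fun j' _ => ?_
            rw [abs_mul]
            exact mul_le_mul_of_nonneg_left ((h2 j').trans (le_abs_self _)) (abs_nonneg _)
        _ ≤ ∑ j', |st.2 j'| * |CB j'| := by
            refine Finset.sum_le_sum_of_subset_of_nonneg (Finset.subset_univ _) ?_
            intro j' _ _
            positivity
  have hder := key_deriv Q K (B j) R hK (hB j) hRm hKb (hBb j) hRb (st.2 j)
  have hsum : ∀ f, (∑ j', st.2 j' * B j' f)
      = st.2 j * B j f + ∑ j' ∈ Finset.univ.erase j, st.2 j' * B j' f := by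
    intro f
    have h := sum_update_mul st.2 j (st.2 j) (fun j' => B j' f)
    rwa [Function.update_eq_self] at h
  simp only [pdSnd]
  have hfun : (fun r => ∫ f, K f *
        Real.exp ((∑ i, st.1 i * A i f) + ∑ j', Function.update st.2 j r j' * B j' f) ∂Q)
      = fun r => ∫ f, K f * Real.exp (r * B j f + R f) ∂Q := by
    funext r
    refine integral_congr_ae (Eventually.of_forall fun f => ?_)
    simp only [hRdef]
    congr 2
    rw [sum_update_mul]
    ring
  rw [hfun, hder.deriv]
  refine integral_congr_ae (Eventually.of_forall fun f => ?_)
  simp only [hRdef]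
  rw [hsum f]
  congr 2
  ring

lemma fold_snd
    (hA : ∀ i, AEStronglyMeasurable (A i) Q) (hB : ∀ j, AEStronglyMeasurable (B j) Q)
    (hAb : ∀ i, ∀ᵐ f ∂Q, |A i f| ≤ CA i) (hBb : ∀ j, ∀ᵐ f ∂Q, |B j f| ≤ CB j)
    (L : List (Fin n)) :
    ∀ (K : α → ℝ) (CK : ℝ), AEStronglyMeasurable K Q → (∀ᵐ f ∂Q, |K f| ≤ CK) →
    List.foldl (fun G j => pdSnd j G)
      (fun st : (Fin m → ℝ) × (Fin n → ℝ) =>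
        ∫ f, K f * Real.exp ((∑ i, st.1 i * A i f) + ∑ j', st.2 j' * B j' f) ∂Q) L
    = fun st => ∫ f, ((L.map (fun j => B j f)).prod * K f) *
        Real.exp ((∑ i, st.1 i * A i f) + ∑ j', st.2 j' * B j' f) ∂Q := by
  induction L with
  | nil =>
      intro K CK hK hKb
      simp
  | cons j L ih =>
      intro K CK hK hKb
      rw [List.foldl_cons, pd_snd_step Q A B CA CB hA hB hAb hBb K CK hK hKb j,
        ih (fun f => B j f * K f) (|CB j| * |CK|) ((hB j).mul hK)
          (by
            filter_upwards [hBb j, hKb] with f h1 h2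
            rw [abs_mul]
            exact mul_le_mul (h1.trans (le_abs_self _)) (h2.trans (le_abs_self _))
              (abs_nonneg _) (abs_nonneg _))]
      funext st
      refine integral_congr_ae (Eventually.of_forall fun f => ?_)
      simp only [List.map_cons, List.prod_cons]
      ring
end Fold2

lemma cont_list_prod {ι γ : Type*} [TopologicalSpace γ] (L : List ι) (g : ι → γ → ℝ)
    (hg : ∀ i, Continuous (g i)) :
    Continuous (fun x => (L.map (fun i => g i x)).prod) := by
  induction L with
  | nil => simpa using continuous_const
  | cons i L ih =>
      simp only [List.map_cons, List.prod_cons]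
      exact (hg i).mul ih

/-- the iterated functional derivatives of the generating functional give the
correlation functions:
`∂_{t_n}⋯∂_{t_1}∂_{s_m}⋯∂_{s_1} F (0,0) = ∫_{B×B} ∏⟨φ_i,v⟩ ∏⟨θ_j,h⟩ e^{−E+⟨J₁,v⟩+⟨J₂,h⟩} dP`
for `F(s,t) = ∫_{B×B} exp(−E(v,h) + ⟨J₁+Σ s_i φ_i, v⟩ + ⟨J₂+Σ t_j θ_j, h⟩) dP`. -/
theorem stmt4 {p : ℕ} [Fact p.Prime] {N : ℕ} (hN : 1 ≤ N)
    [MeasurableSpace (PSpace p N)] [BorelSpace (PSpace p N)]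
    (μ : Measure (PSpace p N)) [IsProbabilityMeasure μ] [μ.IsAddLeftInvariant]
    (a b c d : Lp ℝ ⊤ μ) (w : Lp ℝ ⊤ (μ.prod μ))
    (hc : ∀ᵐ x ∂μ, 0 ≤ c x) (hd : ∀ᵐ x ∂μ, 0 ≤ d x)
    (M : ℝ) (hM : 0 < M)
    [MeasurableSpace (Lp ℝ 2 μ × Lp ℝ 2 μ)] [BorelSpace (Lp ℝ 2 μ × Lp ℝ 2 μ)]
    (P : Measure (Lp ℝ 2 μ × Lp ℝ 2 μ)) [IsProbabilityMeasure P]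
    (J₁ J₂ : Lp ℝ 2 μ) (m n : ℕ) (φ : Fin m → Lp ℝ 2 μ) (θ : Fin n → Lp ℝ 2 μ) :
    iterPD2 (fun st : (Fin m → ℝ) × (Fin n → ℝ) =>
        ∫ f in {f : Lp ℝ 2 μ × Lp ℝ 2 μ | ‖f.1‖ ≤ M ∧ ‖f.2‖ ≤ M},
          boltzmannWeight μ (⇑a) (⇑b) (⇑c) (⇑d) (⇑w) (⇑f.1) (⇑f.2) *
            Real.exp ((∫ x, (J₁ x + ∑ i, st.1 i * φ i x) * f.1 x ∂μ) +
              ∫ x, (J₂ x + ∑ j, st.2 j * θ j x) * f.2 x ∂μ) ∂P) (0, 0)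
      = ∫ f in {f : Lp ℝ 2 μ × Lp ℝ 2 μ | ‖f.1‖ ≤ M ∧ ‖f.2‖ ≤ M},
          ((∏ i, ∫ x, φ i x * f.1 x ∂μ) * ∏ j, ∫ x, θ j x * f.2 x ∂μ) *
            (boltzmannWeight μ (⇑a) (⇑b) (⇑c) (⇑d) (⇑w) (⇑f.1) (⇑f.2) *
              Real.exp ((∫ x, J₁ x * f.1 x ∂μ) + ∫ x, J₂ x * f.2 x ∂μ)) ∂P := by
  classical
  have hSm : MeasurableSet {f : Lp ℝ 2 μ × Lp ℝ 2 μ | ‖f.1‖ ≤ M ∧ ‖f.2‖ ≤ M} :=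
    ((isClosed_le continuous_fst.norm continuous_const).inter
      (isClosed_le continuous_snd.norm continuous_const)).measurableSet
  set Q : Measure (Lp ℝ 2 μ × Lp ℝ 2 μ) :=
    P.restrict {f : Lp ℝ 2 μ × Lp ℝ 2 μ | ‖f.1‖ ≤ M ∧ ‖f.2‖ ≤ M} with hQdef
  haveI : IsFiniteMeasure Q := by rw [hQdef]; infer_instance
  have hmem : ∀ᵐ f ∂Q, ‖f.1‖ ≤ M ∧ ‖f.2‖ ≤ M := by
    rw [hQdef]; exact ae_restrict_mem hSm
  set A : Fin m → (Lp ℝ 2 μ × Lp ℝ 2 μ) → ℝ := fun i f => ∫ x, φ i x * f.1 x ∂μ with hAdef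
  set B : Fin n → (Lp ℝ 2 μ × Lp ℝ 2 μ) → ℝ := fun j f => ∫ x, θ j x * f.2 x ∂μ with hBdef
  set K : (Lp ℝ 2 μ × Lp ℝ 2 μ) → ℝ := fun f =>
    boltzmannWeight μ (⇑a) (⇑b) (⇑c) (⇑d) (⇑w) (⇑f.1) (⇑f.2) *
      Real.exp ((∫ x, J₁ x * f.1 x ∂μ) + ∫ x, J₂ x * f.2 x ∂μ) with hKdef
  -- continuity / measurability
  have hAc : ∀ i, Continuous (A i) := by
    intro i
    have h : (fun f : Lp ℝ 2 μ × Lp ℝ 2 μ => ∫ x, φ i x * f.1 x ∂μ)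
        = fun f : Lp ℝ 2 μ × Lp ℝ 2 μ => (inner ℝ (φ i) f.1 : ℝ) :=
      funext fun f => (inner_eq_integral (φ i) f.1).symm
    show Continuous (fun f : Lp ℝ 2 μ × Lp ℝ 2 μ => ∫ x, φ i x * f.1 x ∂μ)
    rw [h]
    exact continuous_const.inner continuous_fst
  have hBc : ∀ j, Continuous (B j) := by
    intro j
    have h : (fun f : Lp ℝ 2 μ × Lp ℝ 2 μ => ∫ x, θ j x * f.2 x ∂μ)
        = fun f : Lp ℝ 2 μ × Lp ℝ 2 μ => (inner ℝ (θ j) f.2 : ℝ) :=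
      funext fun f => (inner_eq_integral (θ j) f.2).symm
    show Continuous (fun f : Lp ℝ 2 μ × Lp ℝ 2 μ => ∫ x, θ j x * f.2 x ∂μ)
    rw [h]
    exact continuous_const.inner continuous_snd
  have hKP : AEStronglyMeasurable K P := by
    have hrw : K = fun f : Lp ℝ 2 μ × Lp ℝ 2 μ =>
        (Real.exp ((inner ℝ (toL2 a) f.1 : ℝ) + (inner ℝ (toL2 b) f.2 : ℝ) + Phi w f.1 f.2) *
          expNeg ((∫⁻ x, ENNReal.ofReal (c x * f.1 x ^ 4) ∂μ) +
            ∫⁻ x, ENNReal.ofReal (d x * f.2 x ^ 4) ∂μ)) *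
        Real.exp ((inner ℝ J₁ f.1 : ℝ) + (inner ℝ J₂ f.2 : ℝ)) := by
      funext f
      simp only [hKdef]
      unfold boltzmannWeight Phi
      rw [integral_linfty_mul a f.1, integral_linfty_mul b f.2,
        inner_eq_integral J₁ f.1, inner_eq_integral J₂ f.2]
    rw [hrw]
    have c1 : Continuous (fun f : Lp ℝ 2 μ × Lp ℝ 2 μ =>
        Real.exp ((inner ℝ (toL2 a) f.1 : ℝ) + (inner ℝ (toL2 b) f.2 : ℝ) + Phi w f.1 f.2)) :=
      Real.continuous_exp.comp (((continuous_const.inner continuous_fst).add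
        (continuous_const.inner continuous_snd)).add (Phi_continuous w))
    have c2 : Measurable (fun f : Lp ℝ 2 μ × Lp ℝ 2 μ =>
        expNeg ((∫⁻ x, ENNReal.ofReal (c x * f.1 x ^ 4) ∂μ) +
          ∫⁻ x, ENNReal.ofReal (d x * f.2 x ^ 4) ∂μ)) := by
      apply measurable_expNeg.comp
      have l1 := LowerSemicontinuous.comp (psi_lsc (⇑c)
        (MeasureTheory.Lp.aestronglyMeasurable c).aemeasurable)
        (continuous_fst : Continuous fun f : Lp ℝ 2 μ × Lp ℝ 2 μ => f.1)
      have l2 := LowerSemicontinuous.comp (psi_lsc (⇑d)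
        (MeasureTheory.Lp.aestronglyMeasurable d).aemeasurable)
        (continuous_snd : Continuous fun f : Lp ℝ 2 μ × Lp ℝ 2 μ => f.2)
      exact LowerSemicontinuous.measurable (LowerSemicontinuous.add l1 l2)
    have c3 : Continuous (fun f : Lp ℝ 2 μ × Lp ℝ 2 μ =>
        Real.exp ((inner ℝ J₁ f.1 : ℝ) + (inner ℝ J₂ f.2 : ℝ))) :=
      Real.continuous_exp.comp ((continuous_const.inner continuous_fst).add
        (continuous_const.inner continuous_snd))
    exact (c1.aestronglyMeasurable.mul c2.aestronglyMeasurable).mul c3.aestronglyMeasurable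
  have hKQ : AEStronglyMeasurable K Q := hKP.restrict
  -- bounds
  have hAb : ∀ i, ∀ᵐ f ∂Q, |A i f| ≤ ‖φ i‖ * M := by
    intro i
    filter_upwards [hmem] with f hf
    simp only [hAdef]
    exact (l2_abs_integral_mul_le (φ i) f.1).trans
      (mul_le_mul_of_nonneg_left hf.1 (norm_nonneg _))
  have hBb : ∀ j, ∀ᵐ f ∂Q, |B j f| ≤ ‖θ j‖ * M := by
    intro j
    filter_upwards [hmem] with f hf
    simp only [hBdef]
    exact (l2_abs_integral_mul_le (θ j) f.2).trans
      (mul_le_mul_of_nonneg_left hf.2 (norm_nonneg _))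
  have hKb : ∀ᵐ f ∂Q, |K f| ≤
      Real.exp (‖toL2 a‖ * M + ‖toL2 b‖ * M + ‖w‖ * (M * M)) *
        Real.exp (‖J₁‖ * M + ‖J₂‖ * M) := by
    filter_upwards [hmem] with f hf
    simp only [hKdef]
    rw [abs_mul]
    refine mul_le_mul ?_ ?_ (abs_nonneg _) (Real.exp_nonneg _)
    · unfold boltzmannWeight
      rw [abs_mul, Real.abs_exp, abs_of_nonneg (expNeg_nonneg _)]
      have h1 : (∫ x, a x * f.1 x ∂μ) ≤ ‖toL2 a‖ * M :=
        (le_abs_self _).trans ((abs_integral_linfty_mul_le a f.1).trans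
          (mul_le_mul_of_nonneg_left hf.1 (norm_nonneg _)))
      have h2 : (∫ x, b x * f.2 x ∂μ) ≤ ‖toL2 b‖ * M :=
        (le_abs_self _).trans ((abs_integral_linfty_mul_le b f.2).trans
          (mul_le_mul_of_nonneg_left hf.2 (norm_nonneg _)))
      have h3 : (∫ x, ∫ y, f.2 x * w (x, y) * f.1 y ∂μ ∂μ) ≤ ‖w‖ * (M * M) := by
        refine (le_abs_self _).trans ((Phi_bound w f.1 f.2).trans ?_)
        exact mul_le_mul_of_nonneg_left
          (mul_le_mul hf.2 hf.1 (norm_nonneg _) hM.le) (norm_nonneg _)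
      calc Real.exp ((∫ x, a x * f.1 x ∂μ) + (∫ x, b x * f.2 x ∂μ) +
              ∫ x, ∫ y, f.2 x * w (x, y) * f.1 y ∂μ ∂μ) *
            expNeg ((∫⁻ x, ENNReal.ofReal (c x * f.1 x ^ 4) ∂μ) +
              ∫⁻ x, ENNReal.ofReal (d x * f.2 x ^ 4) ∂μ)
          ≤ Real.exp ((∫ x, a x * f.1 x ∂μ) + (∫ x, b x * f.2 x ∂μ) +
              ∫ x, ∫ y, f.2 x * w (x, y) * f.1 y ∂μ ∂μ) * 1 :=
            mul_le_mul_of_nonneg_left (expNeg_le_one _) (Real.exp_nonneg _)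
        _ = Real.exp ((∫ x, a x * f.1 x ∂μ) + (∫ x, b x * f.2 x ∂μ) +
              ∫ x, ∫ y, f.2 x * w (x, y) * f.1 y ∂μ ∂μ) := mul_one _
        _ ≤ Real.exp (‖toL2 a‖ * M + ‖toL2 b‖ * M + ‖w‖ * (M * M)) :=
            Real.exp_le_exp.mpr (add_le_add (add_le_add h1 h2) h3)
    · rw [Real.abs_exp]
      refine Real.exp_le_exp.mpr (add_le_add ?_ ?_)
      · exact (le_abs_self _).trans ((l2_abs_integral_mul_le J₁ f.1).trans
          (mul_le_mul_of_nonneg_left hf.1 (norm_nonneg _)))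
      · exact (le_abs_self _).trans ((l2_abs_integral_mul_le J₂ f.2).trans
          (mul_le_mul_of_nonneg_left hf.2 (norm_nonneg _)))
  -- rewrite the generating functional
  have hFeq : (fun st : (Fin m → ℝ) × (Fin n → ℝ) =>
      ∫ f, boltzmannWeight μ (⇑a) (⇑b) (⇑c) (⇑d) (⇑w) (⇑f.1) (⇑f.2) *
          Real.exp ((∫ x, (J₁ x + ∑ i, st.1 i * φ i x) * f.1 x ∂μ) +
            ∫ x, (J₂ x + ∑ j, st.2 j * θ j x) * f.2 x ∂μ) ∂Q)
      = fun st => ∫ f, K f *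
          Real.exp ((∑ i, st.1 i * A i f) + ∑ j, st.2 j * B j f) ∂Q := by
    funext st
    refine integral_congr_ae (Eventually.of_forall fun f => ?_)
    beta_reduce
    have e1 : (∫ x, (J₁ x + ∑ i, st.1 i * φ i x) * f.1 x ∂μ)
        = (∫ x, J₁ x * f.1 x ∂μ) + ∑ i, st.1 i * A i f := by
      have step1 : (∫ x, (J₁ x + ∑ i, st.1 i * φ i x) * f.1 x ∂μ)
          = ∫ x, (J₁ x * f.1 x + ∑ i, st.1 i * (φ i x * f.1 x)) ∂μ := by
        refine integral_congr_ae (Eventually.of_forall fun x => ?_)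
        beta_reduce
        rw [add_mul, Finset.sum_mul]
        congr 1
        exact Finset.sum_congr rfl fun i _ => by ring
      rw [step1, integral_add (l2_integrable_mul J₁ f.1)
        (integrable_finset_sum _ fun i _ => ((l2_integrable_mul (φ i) f.1).const_mul _)),
        integral_finset_sum _ (fun i _ => ((l2_integrable_mul (φ i) f.1).const_mul _))]
      simp only [hAdef]
      congr 1
      exact Finset.sum_congr rfl fun i _ => integral_const_mul _ _
    have e2 : (∫ x, (J₂ x + ∑ j, st.2 j * θ j x) * f.2 x ∂μ)
        = (∫ x, J₂ x * f.2 x ∂μ) + ∑ j, st.2 j * B j f := by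
      have step1 : (∫ x, (J₂ x + ∑ j, st.2 j * θ j x) * f.2 x ∂μ)
          = ∫ x, (J₂ x * f.2 x + ∑ j, st.2 j * (θ j x * f.2 x)) ∂μ := by
        refine integral_congr_ae (Eventually.of_forall fun x => ?_)
        beta_reduce
        rw [add_mul, Finset.sum_mul]
        congr 1
        exact Finset.sum_congr rfl fun j _ => by ring
      rw [step1, integral_add (l2_integrable_mul J₂ f.2)
        (integrable_finset_sum _ fun j _ => ((l2_integrable_mul (θ j) f.2).const_mul _)),
        integral_finset_sum _ (fun j _ => ((l2_integrable_mul (θ j) f.2).const_mul _))]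
      simp only [hBdef]
      congr 1
      exact Finset.sum_congr rfl fun j _ => integral_const_mul _ _
    rw [e1, e2, show ((∫ x, J₁ x * f.1 x ∂μ) + ∑ i, st.1 i * A i f) +
        ((∫ x, J₂ x * f.2 x ∂μ) + ∑ j, st.2 j * B j f)
        = ((∫ x, J₁ x * f.1 x ∂μ) + ∫ x, J₂ x * f.2 x ∂μ) +
          ((∑ i, st.1 i * A i f) + ∑ j, st.2 j * B j f) from by ring,
      Real.exp_add]
    simp only [hKdef]
    ring
  rw [hFeq]
  -- apply the two folds
  have E1 := fold_fst Q A B (fun i => ‖φ i‖ * M) (fun j => ‖θ j‖ * M)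
    (fun i => (hAc i).aestronglyMeasurable.restrict)
    (fun j => (hBc j).aestronglyMeasurable.restrict) hAb hBb (List.finRange m) K
    (Real.exp (‖toL2 a‖ * M + ‖toL2 b‖ * M + ‖w‖ * (M * M)) *
      Real.exp (‖J₁‖ * M + ‖J₂‖ * M)) hKQ hKb
  have hK2m : AEStronglyMeasurable
      (fun f => ((List.finRange m).map (fun i => A i f)).prod * K f) Q := by
    have hc' : Continuous (fun f : Lp ℝ 2 μ × Lp ℝ 2 μ =>
        ((List.finRange m).map (fun i => A i f)).prod) := cont_list_prod _ _ hAc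
    exact (hc'.aestronglyMeasurable.restrict).mul hKQ
  have hK2b : ∀ᵐ f ∂Q, |((List.finRange m).map (fun i => A i f)).prod * K f| ≤
      ((List.finRange m).map (fun i => ‖φ i‖ * M)).prod *
        (Real.exp (‖toL2 a‖ * M + ‖toL2 b‖ * M + ‖w‖ * (M * M)) *
          Real.exp (‖J₁‖ * M + ‖J₂‖ * M)) := by
    filter_upwards [ae_all_iff.mpr hAb, hKb] with f h1 h2
    rw [abs_mul]
    refine mul_le_mul (abs_list_prod_le _ _ _ h1) h2 (abs_nonneg _)
      (list_prod_nonneg_of_abs _ _ _ h1)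
  have E2 := fold_snd Q A B (fun i => ‖φ i‖ * M) (fun j => ‖θ j‖ * M)
    (fun i => (hAc i).aestronglyMeasurable.restrict)
    (fun j => (hBc j).aestronglyMeasurable.restrict) hAb hBb (List.finRange n)
    (fun f => ((List.finRange m).map (fun i => A i f)).prod * K f)
    (((List.finRange m).map (fun i => ‖φ i‖ * M)).prod *
      (Real.exp (‖toL2 a‖ * M + ‖toL2 b‖ * M + ‖w‖ * (M * M)) *
        Real.exp (‖J₁‖ * M + ‖J₂‖ * M))) hK2m hK2b
  have hlast : (∫ f, (((List.finRange n).map (fun j => B j f)).prod *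
        (((List.finRange m).map (fun i => A i f)).prod * K f)) *
        Real.exp ((∑ i, (0:ℝ) * A i f) + ∑ j, (0:ℝ) * B j f) ∂Q)
      = ∫ f, ((∏ i, ∫ x, φ i x * f.1 x ∂μ) * ∏ j, ∫ x, θ j x * f.2 x ∂μ) *
          (boltzmannWeight μ (⇑a) (⇑b) (⇑c) (⇑d) (⇑w) (⇑f.1) (⇑f.2) *
            Real.exp ((∫ x, J₁ x * f.1 x ∂μ) + ∫ x, J₂ x * f.2 x ∂μ)) ∂Q := by
    refine integral_congr_ae (Eventually.of_forall fun f => ?_)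
    simp only [hAdef, hBdef, hKdef, zero_mul, Finset.sum_const_zero, add_zero,
      Real.exp_zero, mul_one, Fin.prod_univ_def]
    ring
  show (List.foldl (fun G j => pdSnd j G)
    (List.foldl (fun G i => pdFst i G) _ (List.finRange m)) (List.finRange n)) (0, 0) = _
  rw [E1]
  exact (congrFun E2 (0, 0)).trans hlast
end

section
/- Let w ∈ L^∞(ℤ_p^N × ℤ_p^N) with integral operators (Wv)(x) = ∫ w(x,y) v(y) dμ(y) and (W̃h)(y) = ∫ w(x,y) h(x) dμ(x) on L²(ℤ_p^N). Let J₁, J₂ ∈ L²(ℤ_p^N) and suppose v₀, h₀ ∈ L²(ℤ_p^N) satisfy Wv₀ + J₂ = 0 and W̃h₀ + J₁ = 0. Then for every M > 0, every Borel probability measure P on L²(ℤ_p^N) × L²(ℤ_p^N), and B = {f ∈ L²(ℤ_p^N) : ‖f‖₂ ≤ M}, the spin-glass generating integral factorizes as ∫_{B×B} exp(⟨h, Wv⟩ + ⟨v, J₁⟩ + ⟨h, J₂⟩) dP(v,h) = exp(⟨v₀, J₁⟩) · ∫_{B×B} exp(⟨v − v₀, W̃(h − h₀)⟩) dP(v,h),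 both integrals being finite; i.e., Z^spin(J₁,J₂) = C(v₀,h₀) · exp(⟨v₀, J₁⟩) with C(v₀,h₀) a positive constant independent of the integration variables. -/
open MeasureTheory ENNReal Real

/-- if `Wv₀ + J₂ = 0` and `W̃h₀ + J₁ = 0` in `L²`, then the spin-glass generating
integral factorizes:
`∫_{B×B} exp(⟨h,Wv⟩+⟨v,J₁⟩+⟨h,J₂⟩) dP = exp(⟨v₀,J₁⟩) · ∫_{B×B} exp(⟨v−v₀, W̃(h−h₀)⟩) dP`,
both integrals being finite. -/
theorem stmt7 {p : ℕ} [Fact p.Prime] {N : ℕ} (hN : 1 ≤ N)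
    [MeasurableSpace (PSpace p N)] [BorelSpace (PSpace p N)]
    (μ : Measure (PSpace p N)) [IsProbabilityMeasure μ] [μ.IsAddLeftInvariant]
    (w : Lp ℝ ⊤ (μ.prod μ)) (J₁ J₂ v₀ h₀ : Lp ℝ 2 μ)
    (hv₀ : ∀ᵐ x ∂μ, (∫ y, w (x, y) * v₀ y ∂μ) + J₂ x = 0)
    (hh₀ : ∀ᵐ y ∂μ, (∫ x, w (x, y) * h₀ x ∂μ) + J₁ y = 0)
    (M : ℝ) (hM : 0 < M)
    [MeasurableSpace (Lp ℝ 2 μ × Lp ℝ 2 μ)] [BorelSpace (Lp ℝ 2 μ × Lp ℝ 2 μ)]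
    (P : Measure (Lp ℝ 2 μ × Lp ℝ 2 μ)) [IsProbabilityMeasure P] :
    IntegrableOn (fun f : Lp ℝ 2 μ × Lp ℝ 2 μ =>
        Real.exp ((∫ x, ∫ y, f.2 x * w (x, y) * f.1 y ∂μ ∂μ) +
          (∫ x, f.1 x * J₁ x ∂μ) + ∫ x, f.2 x * J₂ x ∂μ))
      {f : Lp ℝ 2 μ × Lp ℝ 2 μ | ‖f.1‖ ≤ M ∧ ‖f.2‖ ≤ M} P ∧
    IntegrableOn (fun f : Lp ℝ 2 μ × Lp ℝ 2 μ =>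
        Real.exp (∫ y, (f.1 y - v₀ y) * (∫ x, w (x, y) * (f.2 x - h₀ x) ∂μ) ∂μ))
      {f : Lp ℝ 2 μ × Lp ℝ 2 μ | ‖f.1‖ ≤ M ∧ ‖f.2‖ ≤ M} P ∧
    (∫ f in {f : Lp ℝ 2 μ × Lp ℝ 2 μ | ‖f.1‖ ≤ M ∧ ‖f.2‖ ≤ M},
        Real.exp ((∫ x, ∫ y, f.2 x * w (x, y) * f.1 y ∂μ ∂μ) +
          (∫ x, f.1 x * J₁ x ∂μ) + ∫ x, f.2 x * J₂ x ∂μ) ∂P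
      = Real.exp (∫ x, v₀ x * J₁ x ∂μ) *
        ∫ f in {f : Lp ℝ 2 μ × Lp ℝ 2 μ | ‖f.1‖ ≤ M ∧ ‖f.2‖ ≤ M},
          Real.exp (∫ y, (f.1 y - v₀ y) * (∫ x, w (x, y) * (f.2 x - h₀ x) ∂μ) ∂μ) ∂P) := by
  classical
  -- basic integrability facts
  have hint2 : ∀ g : Lp ℝ 2 μ, Integrable (fun x => g x) μ :=
    fun g => (Lp.memLp g).integrable one_le_two
  have hwm : AEStronglyMeasurable (fun q : PSpace p N × PSpace p N => w q) (μ.prod μ) := Lp.aestronglyMeasurable w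
  have hwb : ∀ᵐ q ∂(μ.prod μ), ‖w q‖ ≤ ‖w‖ := by
    have h1 := enorm_ae_le_eLpNormEssSup (fun q : PSpace p N × PSpace p N => w q) (μ.prod μ)
    have hne : eLpNormEssSup (fun q : PSpace p N × PSpace p N => w q) (μ.prod μ) ≠ ⊤ := by
      have := Lp.eLpNorm_ne_top w
      rwa [eLpNorm_exponent_top] at this
    filter_upwards [h1] with q hq
    rw [Lp.norm_def, eLpNorm_exponent_top]
    calc ‖w q‖ = ((‖w q‖₊ : ℝ≥0∞)).toReal := by simp
      _ ≤ _ := ENNReal.toReal_mono hne hq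
  have hInt : ∀ a b : Lp ℝ 2 μ,
      Integrable (fun z : PSpace p N × PSpace p N => w z * (a z.1 * b z.2)) (μ.prod μ) :=
    fun a b => ((hint2 a).mul_prod (hint2 b)).bdd_mul hwm hwb
  set D : Lp ℝ 2 μ → Lp ℝ 2 μ → ℝ :=
    fun b a => ∫ z : PSpace p N × PSpace p N, w z * (b z.1 * a z.2) ∂(μ.prod μ) with hDdef
  -- (i) iterated integral = D
  have hDi : ∀ b a : Lp ℝ 2 μ, (∫ x, ∫ y, b x * w (x, y) * a y ∂μ ∂μ) = D b a := by
    intro b a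
    have h1 : Integrable (Function.uncurry fun x y => (b : PSpace p N → ℝ) x * w (x, y) * a y)
        (μ.prod μ) :=
      (hInt b a).congr (Filter.Eventually.of_forall fun z => by
        obtain ⟨x, y⟩ := z; simp only [Function.uncurry]; ring)
    rw [integral_integral h1, hDdef]
    exact integral_congr_ae (Filter.Eventually.of_forall fun z => by
      obtain ⟨x, y⟩ := z; ring)
  -- (i') pull out the first factor
  have hDpull : ∀ b a : Lp ℝ 2 μ, D b a = ∫ x, b x * ∫ y, w (x, y) * a y ∂μ ∂μ := by
    intro b a
    have h1 : Integrable (Function.uncurry fun x y => w (x, y) * ((b : PSpace p N → ℝ) x * a y))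
        (μ.prod μ) :=
      (hInt b a).congr (Filter.Eventually.of_forall fun z => by
        obtain ⟨x, y⟩ := z; rfl)
    have h2 : D b a = ∫ x, ∫ y, w (x, y) * ((b : PSpace p N → ℝ) x * a y) ∂μ ∂μ := by
      rw [integral_integral h1, hDdef]
    rw [h2]
    refine integral_congr_ae (Filter.Eventually.of_forall fun x => ?_)
    beta_reduce
    rw [← integral_const_mul]
    exact integral_congr_ae (Filter.Eventually.of_forall fun y => by ring)
  -- (ii') pull out the second factor (after swapping)
  have hDpull2 : ∀ b a : Lp ℝ 2 μ, D b a = ∫ y, a y * ∫ x, w (x, y) * b x ∂μ ∂μ := by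
    intro b a
    have hswap : D b a = ∫ z : PSpace p N × PSpace p N, w (z.2, z.1) * ((b : PSpace p N → ℝ) z.2 * a z.1) ∂(μ.prod μ) := by
      rw [hDdef]
      beta_reduce
      rw [← integral_prod_swap (fun z : PSpace p N × PSpace p N => w z * ((b : PSpace p N → ℝ) z.1 * a z.2))]
      exact integral_congr_ae (Filter.Eventually.of_forall fun z => by
        obtain ⟨y, x⟩ := z; rfl)
    have h1 : Integrable (fun z : PSpace p N × PSpace p N => w (z.2, z.1) * ((b : PSpace p N → ℝ) z.2 * a z.1))
        (μ.prod μ) := by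
      have := (Measure.measurePreserving_swap (μ := μ) (ν := μ)).integrable_comp
        (hInt b a).aestronglyMeasurable
      have h2 : Integrable ((fun z : PSpace p N × PSpace p N => w z * ((b : PSpace p N → ℝ) z.1 * a z.2)) ∘ Prod.swap)
          (μ.prod μ) := this.2 (hInt b a)
      exact h2.congr (Filter.Eventually.of_forall fun z => by
        obtain ⟨y, x⟩ := z; rfl)
    have h1' : Integrable (Function.uncurry fun y x => w (x, y) * ((b : PSpace p N → ℝ) x * a y))
        (μ.prod μ) := h1.congr (Filter.Eventually.of_forall fun z => by
        obtain ⟨y, x⟩ := z; rfl)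
    have h2 : D b a = ∫ y, ∫ x, w (x, y) * ((b : PSpace p N → ℝ) x * a y) ∂μ ∂μ := by
      rw [hswap, integral_integral h1']
    rw [h2]
    refine integral_congr_ae (Filter.Eventually.of_forall fun y => ?_)
    beta_reduce
    rw [← integral_const_mul]
    exact integral_congr_ae (Filter.Eventually.of_forall fun x => by ring)
  -- lifting a.e. equalities to the product
  have hmapfst : (μ.prod μ).map Prod.fst = μ := by
    rw [Measure.map_fst_prod]; simp
  have hmapsnd : (μ.prod μ).map Prod.snd = μ := by
    rw [Measure.map_snd_prod]; simp
  have hfst : ∀ {g g' : PSpace p N → ℝ}, g =ᵐ[μ] g' →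
      (fun z : PSpace p N × PSpace p N => g z.1) =ᵐ[μ.prod μ] fun z => g' z.1 := by
    intro g g' hgg'
    exact ae_eq_comp (measurable_fst.aemeasurable) (by rwa [hmapfst])
  have hsnd : ∀ {g g' : PSpace p N → ℝ}, g =ᵐ[μ] g' →
      (fun z : PSpace p N × PSpace p N => g z.2) =ᵐ[μ.prod μ] fun z => g' z.2 := by
    intro g g' hgg'
    exact ae_eq_comp (measurable_snd.aemeasurable) (by rwa [hmapsnd])
  -- bilinearity (differences)
  have hDsub1 : ∀ b b' a : Lp ℝ 2 μ, D (b - b') a = D b a - D b' a := by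
    intro b b' a
    have h1 : (fun z : PSpace p N × PSpace p N => w z * (((b - b' : Lp ℝ 2 μ) : PSpace p N → ℝ) z.1 * a z.2))
        =ᵐ[μ.prod μ] fun z => w z * ((b : PSpace p N → ℝ) z.1 * a z.2) - w z * ((b' : PSpace p N → ℝ) z.1 * a z.2) := by
      filter_upwards [hfst (Lp.coeFn_sub b b')] with z hz
      rw [hz]; simp only [Pi.sub_apply]; ring
    rw [hDdef]
    calc (∫ z : PSpace p N × PSpace p N, w z * (((b - b' : Lp ℝ 2 μ) : PSpace p N → ℝ) z.1 * a z.2) ∂(μ.prod μ))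
        = ∫ z : PSpace p N × PSpace p N, (w z * ((b : PSpace p N → ℝ) z.1 * a z.2) - w z * ((b' : PSpace p N → ℝ) z.1 * a z.2))
            ∂(μ.prod μ) := integral_congr_ae h1
      _ = _ := integral_sub (hInt b a) (hInt b' a)
  have hDsub2 : ∀ b a a' : Lp ℝ 2 μ, D b (a - a') = D b a - D b a' := by
    intro b a a'
    have h1 : (fun z : PSpace p N × PSpace p N => w z * ((b : PSpace p N → ℝ) z.1 * ((a - a' : Lp ℝ 2 μ) : PSpace p N → ℝ) z.2))
        =ᵐ[μ.prod μ] fun z => w z * ((b : PSpace p N → ℝ) z.1 * a z.2) - w z * ((b : PSpace p N → ℝ) z.1 * a' z.2) := by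
      filter_upwards [hsnd (Lp.coeFn_sub a a')] with z hz
      rw [hz]; simp only [Pi.sub_apply]; ring
    rw [hDdef]
    calc (∫ z : PSpace p N × PSpace p N, w z * ((b : PSpace p N → ℝ) z.1 * ((a - a' : Lp ℝ 2 μ) : PSpace p N → ℝ) z.2) ∂(μ.prod μ))
        = ∫ z : PSpace p N × PSpace p N, (w z * ((b : PSpace p N → ℝ) z.1 * a z.2) - w z * ((b : PSpace p N → ℝ) z.1 * a' z.2))
            ∂(μ.prod μ) := integral_congr_ae h1
      _ = _ := integral_sub (hInt b a) (hInt b a')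
  -- L¹ norm bounded by L² norm
  have hL1 : ∀ g : Lp ℝ 2 μ, (∫ x, ‖g x‖ ∂μ) ≤ ‖g‖ := by
    intro g
    rw [integral_norm_eq_lintegral_enorm (Lp.aestronglyMeasurable g), Lp.norm_def]
    refine ENNReal.toReal_mono (Lp.eLpNorm_ne_top g) ?_
    rw [← eLpNorm_one_eq_lintegral_enorm]
    exact eLpNorm_le_eLpNorm_of_exponent_le one_le_two (Lp.aestronglyMeasurable g)
  -- bound on D
  have habs : ∀ b a : Lp ℝ 2 μ, |D b a| ≤ ‖w‖ * ‖b‖ * ‖a‖ := by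
    intro b a
    have hdom : Integrable (fun z : PSpace p N × PSpace p N => ‖w‖ * (‖(b : PSpace p N → ℝ) z.1‖ * ‖(a : PSpace p N → ℝ) z.2‖))
        (μ.prod μ) := ((hint2 b).norm.mul_prod (hint2 a).norm).const_mul ‖w‖
    have h1 : |D b a| ≤ ∫ z : PSpace p N × PSpace p N, ‖w z * ((b : PSpace p N → ℝ) z.1 * a z.2)‖ ∂(μ.prod μ) := by
      rw [hDdef, ← Real.norm_eq_abs]
      exact norm_integral_le_integral_norm _
    have h2 : (∫ z : PSpace p N × PSpace p N, ‖w z * ((b : PSpace p N → ℝ) z.1 * a z.2)‖ ∂(μ.prod μ))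
        ≤ ∫ z : PSpace p N × PSpace p N, ‖w‖ * (‖(b : PSpace p N → ℝ) z.1‖ * ‖(a : PSpace p N → ℝ) z.2‖) ∂(μ.prod μ) := by
      refine integral_mono_of_nonneg (Filter.Eventually.of_forall fun z => norm_nonneg _)
        hdom ?_
      filter_upwards [hwb] with z hz
      calc ‖w z * ((b : PSpace p N → ℝ) z.1 * a z.2)‖ = ‖w z‖ * ‖(b : PSpace p N → ℝ) z.1 * a z.2‖ := norm_mul _ _
        _ ≤ ‖w‖ * (‖(b : PSpace p N → ℝ) z.1‖ * ‖(a : PSpace p N → ℝ) z.2‖) := by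
            rw [norm_mul]
            exact mul_le_mul_of_nonneg_right hz (by positivity)
    have h3 : (∫ z : PSpace p N × PSpace p N, ‖w‖ * (‖(b : PSpace p N → ℝ) z.1‖ * ‖(a : PSpace p N → ℝ) z.2‖) ∂(μ.prod μ))
        = ‖w‖ * ((∫ x, ‖(b : PSpace p N → ℝ) x‖ ∂μ) * ∫ y, ‖(a : PSpace p N → ℝ) y‖ ∂μ) := by
      rw [integral_const_mul, integral_prod_mul (fun x => ‖(b : PSpace p N → ℝ) x‖) (fun y => ‖(a : PSpace p N → ℝ) y‖)]
    have h4 : ‖w‖ * ((∫ x, ‖(b : PSpace p N → ℝ) x‖ ∂μ) * ∫ y, ‖(a : PSpace p N → ℝ) y‖ ∂μ)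
        ≤ ‖w‖ * (‖b‖ * ‖a‖) := by
      have h5 : (∫ x, ‖(b : PSpace p N → ℝ) x‖ ∂μ) * (∫ y, ‖(a : PSpace p N → ℝ) y‖ ∂μ)
          ≤ ‖b‖ * ‖a‖ :=
        mul_le_mul (hL1 b) (hL1 a) (integral_nonneg fun y => norm_nonneg _)
          ((integral_nonneg fun x => norm_nonneg _).trans (hL1 b))
      exact mul_le_mul_of_nonneg_left h5 (norm_nonneg w)
    calc |D b a| ≤ _ := h1
      _ ≤ _ := h2
      _ = _ := h3
      _ ≤ ‖w‖ * (‖b‖ * ‖a‖) := h4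
      _ = ‖w‖ * ‖b‖ * ‖a‖ := by ring
  -- continuity of the bilinear part
  have hDcont : Continuous fun f : Lp ℝ 2 μ × Lp ℝ 2 μ => D f.2 f.1 := by
    rw [continuous_iff_continuousAt]
    intro f₀
    unfold ContinuousAt
    rw [tendsto_iff_dist_tendsto_zero]
    have key : ∀ f : Lp ℝ 2 μ × Lp ℝ 2 μ, dist (D f.2 f.1) (D f₀.2 f₀.1)
        ≤ ‖w‖ * ‖f.2 - f₀.2‖ * ‖f.1‖ + ‖w‖ * ‖f₀.2‖ * ‖f.1 - f₀.1‖ := by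
      intro f
      have h1 : D f.2 f.1 - D f₀.2 f₀.1 = D (f.2 - f₀.2) f.1 + D f₀.2 (f.1 - f₀.1) := by
        rw [hDsub1, hDsub2]; ring
      rw [Real.dist_eq, h1]
      calc |D (f.2 - f₀.2) f.1 + D f₀.2 (f.1 - f₀.1)|
          ≤ |D (f.2 - f₀.2) f.1| + |D f₀.2 (f.1 - f₀.1)| := abs_add_le _ _
        _ ≤ _ := add_le_add (habs _ _) (habs _ _)
    refine squeeze_zero (fun f => dist_nonneg) key ?_
    have hg : Continuous fun f : Lp ℝ 2 μ × Lp ℝ 2 μ =>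
        ‖w‖ * ‖f.2 - f₀.2‖ * ‖f.1‖ + ‖w‖ * ‖f₀.2‖ * ‖f.1 - f₀.1‖ := by
      exact ((continuous_const.mul ((continuous_snd.sub continuous_const).norm)).mul
        continuous_fst.norm).add ((continuous_const.mul continuous_const).mul
        ((continuous_fst.sub continuous_const).norm))
    have h0 : (‖w‖ * ‖f₀.2 - f₀.2‖ * ‖f₀.1‖ + ‖w‖ * ‖f₀.2‖ * ‖f₀.1 - f₀.1‖) = (0 : ℝ) := by
      simp
    exact h0 ▸ hg.tendsto f₀
  -- inner products
  have hip : ∀ g J : Lp ℝ 2 μ, (∫ x, g x * J x ∂μ) = (inner ℝ g J : ℝ) := by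
    intro g J
    rw [L2.inner_def]
    refine integral_congr_ae (Filter.Eventually.of_forall fun x => ?_)
    simp [RCLike.inner_apply, mul_comm]
  -- the function E1
  set E1 : Lp ℝ 2 μ × Lp ℝ 2 μ → ℝ :=
    fun f => D f.2 f.1 + (inner ℝ f.1 J₁ : ℝ) + (inner ℝ f.2 J₂ : ℝ) with hE1def
  have hE1 : (fun f : Lp ℝ 2 μ × Lp ℝ 2 μ =>
      Real.exp ((∫ x, ∫ y, f.2 x * w (x, y) * f.1 y ∂μ ∂μ) +
        (∫ x, f.1 x * J₁ x ∂μ) + ∫ x, f.2 x * J₂ x ∂μ))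
      = fun f => Real.exp (E1 f) := by
    funext f
    rw [hE1def, hDi f.2 f.1, hip f.1 J₁, hip f.2 J₂]
  have hE1cont : Continuous E1 := by
    rw [hE1def]
    exact (hDcont.add (continuous_fst.inner continuous_const)).add
      (continuous_snd.inner continuous_const)
  -- the set S
  set S : Set (Lp ℝ 2 μ × Lp ℝ 2 μ) := {f | ‖f.1‖ ≤ M ∧ ‖f.2‖ ≤ M} with hSdef
  have hSclosed : IsClosed S := by
    have : S = {f : Lp ℝ 2 μ × Lp ℝ 2 μ | ‖f.1‖ ≤ M} ∩ {f | ‖f.2‖ ≤ M} := rfl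
    rw [this]
    exact (isClosed_le continuous_fst.norm continuous_const).inter
      (isClosed_le continuous_snd.norm continuous_const)
  have hSmeas : MeasurableSet S := hSclosed.measurableSet
  -- bound on S
  set K : ℝ := ‖w‖ * M * M + M * ‖J₁‖ + M * ‖J₂‖ with hKdef
  have hbd : ∀ f ∈ S, ‖Real.exp (E1 f)‖ ≤ Real.exp K := by
    intro f hf
    rw [Real.norm_eq_abs, Real.abs_exp, Real.exp_le_exp]
    obtain ⟨hf1, hf2⟩ := hf
    have b1 : |D f.2 f.1| ≤ ‖w‖ * M * M := by
      refine (habs f.2 f.1).trans ?_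
      gcongr
    have b2 : |(inner ℝ f.1 J₁ : ℝ)| ≤ M * ‖J₁‖ := by
      refine (abs_real_inner_le_norm f.1 J₁).trans ?_
      gcongr
    have b3 : |(inner ℝ f.2 J₂ : ℝ)| ≤ M * ‖J₂‖ := by
      refine (abs_real_inner_le_norm f.2 J₂).trans ?_
      gcongr
    have := abs_add_le (D f.2 f.1 + (inner ℝ f.1 J₁ : ℝ)) ((inner ℝ f.2 J₂ : ℝ))
    have := abs_add_le (D f.2 f.1) ((inner ℝ f.1 J₁ : ℝ))
    have hle := le_abs_self (E1 f)
    rw [hE1def] at hle ⊢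
    simp only at hle ⊢
    calc D f.2 f.1 + (inner ℝ f.1 J₁ : ℝ) + (inner ℝ f.2 J₂ : ℝ)
        ≤ |D f.2 f.1| + |(inner ℝ f.1 J₁ : ℝ)| + |(inner ℝ f.2 J₂ : ℝ)| := by
          have := le_abs_self (D f.2 f.1)
          have := le_abs_self ((inner ℝ f.1 J₁ : ℝ))
          have := le_abs_self ((inner ℝ f.2 J₂ : ℝ))
          linarith
      _ ≤ ‖w‖ * M * M + M * ‖J₁‖ + M * ‖J₂‖ := by linarith
  -- measurability of the integrand
  have hmeasE1 : AEStronglyMeasurable (fun f => Real.exp (E1 f)) (P.restrict S) :=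
    (Real.continuous_exp.comp hE1cont).stronglyMeasurable.aestronglyMeasurable
  -- first integrability
  have hInt1 : IntegrableOn (fun f => Real.exp (E1 f)) S P := by
    refine Integrable.mono' (integrable_const (Real.exp K)) hmeasE1 ?_
    rw [ae_restrict_iff' hSmeas]
    exact Filter.Eventually.of_forall fun f hf => hbd f hf
  -- the key pointwise identity
  set c : ℝ := ∫ x, v₀ x * J₁ x ∂μ with hcdef
  have key2 : ∀ f : Lp ℝ 2 μ × Lp ℝ 2 μ,
      (∫ y, (f.1 y - v₀ y) * (∫ x, w (x, y) * (f.2 x - h₀ x) ∂μ) ∂μ) = E1 f - c := by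
    intro f
    set a : Lp ℝ 2 μ := f.1 - v₀ with hadef
    set b : Lp ℝ 2 μ := f.2 - h₀ with hbdef
    have step1 : (∫ y, (f.1 y - v₀ y) * (∫ x, w (x, y) * (f.2 x - h₀ x) ∂μ) ∂μ)
        = ∫ y, a y * (∫ x, w (x, y) * b x ∂μ) ∂μ := by
      refine integral_congr_ae ?_
      filter_upwards [Lp.coeFn_sub f.1 v₀] with y hy
      have hinner : (∫ x, w (x, y) * (f.2 x - h₀ x) ∂μ) = ∫ x, w (x, y) * b x ∂μ := by
        refine integral_congr_ae ?_
        filter_upwards [Lp.coeFn_sub f.2 h₀] with x hx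
        rw [hbdef, hx]; simp
      rw [hinner, hadef, hy]; simp
    have step2 : (∫ y, a y * (∫ x, w (x, y) * b x ∂μ) ∂μ) = D b a := (hDpull2 b a).symm
    have step3 : D b a = D f.2 f.1 - D f.2 v₀ - D h₀ f.1 + D h₀ v₀ := by
      rw [hadef, hbdef, hDsub1, hDsub2, hDsub2]; ring
    have step4 : D h₀ f.1 = -(inner ℝ f.1 J₁ : ℝ) := by
      rw [hDpull2 h₀ f.1]
      have : (∫ y, f.1 y * (∫ x, w (x, y) * h₀ x ∂μ) ∂μ) = ∫ y, f.1 y * (-(J₁ y)) ∂μ := by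
        refine integral_congr_ae ?_
        filter_upwards [hh₀] with y hy
        rw [show (∫ x, w (x, y) * h₀ x ∂μ) = -(J₁ y) by linarith]
      rw [this]
      simp only [mul_neg]
      rw [integral_neg, hip f.1 J₁]
    have step5 : D f.2 v₀ = -(inner ℝ f.2 J₂ : ℝ) := by
      rw [hDpull f.2 v₀]
      have : (∫ x, f.2 x * (∫ y, w (x, y) * v₀ y ∂μ) ∂μ) = ∫ x, f.2 x * (-(J₂ x)) ∂μ := by
        refine integral_congr_ae ?_
        filter_upwards [hv₀] with x hx
        rw [show (∫ y, w (x, y) * v₀ y ∂μ) = -(J₂ x) by linarith]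
      rw [this]
      simp only [mul_neg]
      rw [integral_neg, hip f.2 J₂]
    have step6 : D h₀ v₀ = -c := by
      rw [hDpull2 h₀ v₀]
      have : (∫ y, v₀ y * (∫ x, w (x, y) * h₀ x ∂μ) ∂μ) = ∫ y, v₀ y * (-(J₁ y)) ∂μ := by
        refine integral_congr_ae ?_
        filter_upwards [hh₀] with y hy
        rw [show (∫ x, w (x, y) * h₀ x ∂μ) = -(J₁ y) by linarith]
      rw [this]
      simp only [mul_neg]
      rw [integral_neg, hcdef]
    rw [step1, step2, step3, step4, step5, step6, hE1def]
    ring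
  -- rewrite the second integrand
  have hfun2 : (fun f : Lp ℝ 2 μ × Lp ℝ 2 μ =>
      Real.exp (∫ y, (f.1 y - v₀ y) * (∫ x, w (x, y) * (f.2 x - h₀ x) ∂μ) ∂μ))
      = fun f => Real.exp (-c) * Real.exp (E1 f) := by
    funext f
    rw [key2 f, ← Real.exp_add]
    ring_nf
  refine ⟨?_, ?_, ?_⟩
  · rw [hE1]
    exact hInt1
  · rw [hfun2]
    exact hInt1.const_mul _
  · rw [hE1, hfun2, integral_const_mul, ← mul_assoc, ← Real.exp_add]
    simp
end

section
/- (Wick-type 3-partition formula.) Let G ∈ L¹(ℤ_p^N), a, b ∈ L^∞(ℤ_p^N), and F(J₁, J₂) = ⟨G ∗ (b + J₂), a + J₁⟩ for J₁, J₂ ∈ L²(ℤ_p^N). Fix m, n ≥ 0, φ_1, …, φ_m ∈ L²(ℤ_p^N) and θ_1, …, θ_n ∈ L²(ℤ_p^N). Then the iterated partial derivative ∂_{t_n} ⋯ ∂_{t_1} ∂_{s_m} ⋯ ∂_{s_1}, at (s,t) = (0,0), of the map (s,t) ∈ ℝ^m × ℝ^n ↦ exp F(Σ_{i=1}^m s_i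 φ_i, Σ_{j=1}^n t_j θ_j) equals exp(⟨G ∗ b, a⟩) times the sum, over all subsets A ⊆ {1,…,n} and all injective maps σ : {1,…,n} \ A → {1,…,m}, of ∏_{j ∈ A} ⟨G ∗ θ_j, a⟩ · ∏_{j ∈ {1,…,n} \ A} ⟨G ∗ θ_j, φ_{σ(j)}⟩ · ∏_{i ∈ {1,…,m} \ σ({1,…,n} \ A)} ⟨G ∗ b, φ_i⟩. (For n > m the terms with |A| < n − m are absent since no injections exist.) -/
open MeasureTheory ENNReal Real

/-- Convolution on the group `ℤ_p^N`: `(G ∗ g)(x) = ∫ G(x−y) g(y) dμ(y)`. -/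
noncomputable def conv {p : ℕ} [Fact p.Prime] {N : ℕ}
    [MeasurableSpace (PSpace p N)] (μ : Measure (PSpace p N))
    (G g : PSpace p N → ℝ) : PSpace p N → ℝ :=
  fun x => ∫ y, G (x - y) * g y ∂μ

/-- The functional `F(J₁,J₂) = ⟨G ∗ (b + J₂), a + J₁⟩`. -/
noncomputable def Fgen {p : ℕ} [Fact p.Prime] {N : ℕ}
    [MeasurableSpace (PSpace p N)] (μ : Measure (PSpace p N))
    (G a b : PSpace p N → ℝ) (J₁ J₂ : PSpace p N → ℝ) : ℝ :=
  ∫ x, conv μ G (fun y => b y + J₂ y) x * (a x + J₁ x) ∂μ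

set_option linter.unusedSectionVars false
set_option linter.unusedVariables false
set_option maxHeartbeats 1000000
noncomputable section

section A
variable {p : ℕ} [Fact p.Prime] {N : ℕ}
  [MeasurableSpace (PSpace p N)] [BorelSpace (PSpace p N)]
  {μ : Measure (PSpace p N)} [IsProbabilityMeasure μ] [μ.IsAddLeftInvariant]
  {G u v : PSpace p N → ℝ}

lemma intA1 (hG : Integrable G μ) (hu : MemLp u 2 μ) (hv : MemLp v 2 μ) :
    Integrable (fun q : PSpace p N × PSpace p N => G (q.1 - q.2) * (u q.2 * v q.1)) (μ.prod μ) := by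
  have mp : MeasurePreserving (fun z : PSpace p N × PSpace p N => (z.1 - z.2, z.2))
      (μ.prod μ) (μ.prod μ) := measurePreserving_sub_prod μ μ
  have mp2 : Measure.QuasiMeasurePreserving (fun z : PSpace p N × PSpace p N => z.1 + z.2)
      (μ.prod μ) μ :=
    Measure.quasiMeasurePreserving_fst.comp (measurePreserving_add_prod μ μ).quasiMeasurePreserving
  set f : PSpace p N × PSpace p N → ℝ := fun z => G z.1 * (u z.2 * v (z.1 + z.2)) with hf
  have hmeas : AEStronglyMeasurable f (μ.prod μ) := by
    exact (hG.aestronglyMeasurable.comp_quasiMeasurePreserving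
      Measure.quasiMeasurePreserving_fst).mul
      ((hu.aestronglyMeasurable.comp_quasiMeasurePreserving
        Measure.quasiMeasurePreserving_snd).mul
        (hv.aestronglyMeasurable.comp_quasiMeasurePreserving mp2))
  have hfi : Integrable f (μ.prod μ) := by
    refine ⟨hmeas, ?_⟩
    rw [hasFiniteIntegral_def]
    have hconj : (2:ℝ).HolderConjugate 2 := by constructor <;> norm_num
    set A : ℝ≥0∞ := (∫⁻ y, (‖u y‖₊ : ℝ≥0∞) ^ (2:ℝ) ∂μ) ^ (1/(2:ℝ)) *
        (∫⁻ y, (‖v y‖₊ : ℝ≥0∞) ^ (2:ℝ) ∂μ) ^ (1/(2:ℝ)) with hA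
    have hAlt : A < ∞ := by
      have h1 := hu.2
      have h2 := hv.2
      rw [eLpNorm_eq_lintegral_rpow_enorm_toReal (by norm_num) (by norm_num)] at h1 h2
      simp only [ENNReal.toReal_ofNat] at h1 h2
      exact ENNReal.mul_lt_top h1 h2
    calc ∫⁻ z, (‖f z‖₊ : ℝ≥0∞) ∂(μ.prod μ)
        = ∫⁻ x, ∫⁻ y, (‖G x‖₊ : ℝ≥0∞) * ((‖u y‖₊ : ℝ≥0∞) * ‖v (x + y)‖₊) ∂μ ∂μ := by
          rw [lintegral_prod (fun z => (‖f z‖₊ : ℝ≥0∞)) hmeas.enorm]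
          congr 1; ext x; congr 1; ext y
          simp [hf, nnnorm_mul, ENNReal.coe_mul]
      _ ≤ ∫⁻ x, (‖G x‖₊ : ℝ≥0∞) * A ∂μ := by
          refine lintegral_mono fun x => ?_
          rw [lintegral_const_mul' _ _ coe_ne_top]
          refine mul_le_mul_right ?_ _
          have hCS := ENNReal.lintegral_mul_le_Lp_mul_Lq μ hconj
            (hu.aestronglyMeasurable.enorm)
            ((hv.aestronglyMeasurable.comp_quasiMeasurePreserving
              (measurePreserving_add_left μ x).quasiMeasurePreserving).enorm)
          have htr : ∫⁻ y, (‖v (x + y)‖₊ : ℝ≥0∞) ^ (2:ℝ) ∂μ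
              = ∫⁻ y, (‖v y‖₊ : ℝ≥0∞) ^ (2:ℝ) ∂μ :=
            lintegral_add_left_eq_self (μ := μ) (fun y => (‖v y‖₊ : ℝ≥0∞) ^ (2:ℝ)) x
          calc ∫⁻ y, (‖u y‖₊ : ℝ≥0∞) * ‖v (x + y)‖₊ ∂μ
              ≤ (∫⁻ y, (‖u y‖₊ : ℝ≥0∞) ^ (2:ℝ) ∂μ) ^ (1/(2:ℝ)) *
                (∫⁻ y, (‖v (x+y)‖₊ : ℝ≥0∞) ^ (2:ℝ) ∂μ) ^ (1/(2:ℝ)) := hCS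
            _ = A := by rw [htr]
      _ = (∫⁻ x, (‖G x‖₊ : ℝ≥0∞) ∂μ) * A := lintegral_mul_const' _ _ hAlt.ne
      _ < ∞ := ENNReal.mul_lt_top (hasFiniteIntegral_def _ _ |>.mp hG.2) hAlt
  have heq : (fun q : PSpace p N × PSpace p N => G (q.1 - q.2) * (u q.2 * v q.1))
      = f ∘ (fun z : PSpace p N × PSpace p N => (z.1 - z.2, z.2)) := by
    funext q
    simp [hf, sub_add_cancel]
  rw [heq]
  exact (mp.integrable_comp hfi.aestronglyMeasurable).mpr hfi


/-- The pairing as a double integral. -/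
lemma pairA2 (hG : Integrable G μ) (hu : MemLp u 2 μ) (hv : MemLp v 2 μ) :
    ∫ x, conv μ G u x * v x ∂μ
      = ∫ z : PSpace p N × PSpace p N, G (z.1 - z.2) * (u z.2 * v z.1) ∂(μ.prod μ) := by
  have h1 : ∀ x, conv μ G u x * v x = ∫ y, G (x - y) * (u y * v x) ∂μ := by
    intro x
    rw [conv, ← integral_mul_const]
    congr 1; ext y; ring
  simp_rw [h1]
  exact integral_integral (intA1 hG hu hv)

lemma memL2_sum {k : ℕ} (ψ : Fin k → Lp ℝ 2 μ) (r : Fin k → ℝ) :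
    MemLp (fun x => ∑ j, r j * ψ j x) 2 μ := by
  have : ∀ j ∈ Finset.univ, MemLp (fun x => r j * ψ j x) 2 μ := by
    intro j _
    exact (Lp.memLp (ψ j)).const_mul (r j)
  have h := memLp_finset_sum' Finset.univ this
  have he : (∑ j, fun x => r j * ψ j x) = fun x => ∑ j, r j * ψ j x := by
    funext x; simp
  rwa [he] at h

lemma pair_expand_v (hG : Integrable G μ) (hu : MemLp u 2 μ) {m : ℕ}
    (a : Lp ℝ ⊤ μ) (φ : Fin m → Lp ℝ 2 μ) (s : Fin m → ℝ) :
    ∫ z : PSpace p N × PSpace p N, G (z.1 - z.2) * (u z.2 * (a z.1 + ∑ i, s i * φ i z.1)) ∂(μ.prod μ)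
      = (∫ z : PSpace p N × PSpace p N, G (z.1 - z.2) * (u z.2 * a z.1) ∂(μ.prod μ))
        + ∑ i, s i * ∫ z : PSpace p N × PSpace p N, G (z.1 - z.2) * (u z.2 * φ i z.1) ∂(μ.prod μ) := by
  have ha2 : MemLp (⇑a) 2 μ := (Lp.memLp a).mono_exponent le_top
  have h1 : (fun z : PSpace p N × PSpace p N =>
        G (z.1 - z.2) * (u z.2 * (a z.1 + ∑ i, s i * φ i z.1)))
      = fun z => G (z.1 - z.2) * (u z.2 * a z.1)
        + ∑ i, s i * (G (z.1 - z.2) * (u z.2 * φ i z.1)) := by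
    funext z
    simp only [Finset.mul_sum, Finset.sum_mul, mul_add, add_mul]
    congr 1
    exact Finset.sum_congr rfl fun i _ => by ring
  rw [h1, integral_add (intA1 hG hu ha2), integral_finset_sum]
  · congr 1
    refine Finset.sum_congr rfl fun i _ => ?_
    rw [integral_const_mul]
  · intro i _
    exact (intA1 hG hu (Lp.memLp (φ i))).const_mul (s i)
  · refine integrable_finset_sum _ fun i _ => (intA1 hG hu (Lp.memLp (φ i))).const_mul (s i)

lemma pair_expand_u (hG : Integrable G μ) (hv : MemLp v 2 μ) {n : ℕ}
    (b : Lp ℝ ⊤ μ) (θ : Fin n → Lp ℝ 2 μ) (t : Fin n → ℝ) :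
    ∫ z : PSpace p N × PSpace p N, G (z.1 - z.2) * ((b z.2 + ∑ j, t j * θ j z.2) * v z.1) ∂(μ.prod μ)
      = (∫ z : PSpace p N × PSpace p N, G (z.1 - z.2) * (b z.2 * v z.1) ∂(μ.prod μ))
        + ∑ j, t j * ∫ z : PSpace p N × PSpace p N, G (z.1 - z.2) * (θ j z.2 * v z.1) ∂(μ.prod μ) := by
  have hb2 : MemLp (⇑b) 2 μ := (Lp.memLp b).mono_exponent le_top
  have h1 : (fun z : PSpace p N × PSpace p N =>
        G (z.1 - z.2) * ((b z.2 + ∑ j, t j * θ j z.2) * v z.1))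
      = fun z => G (z.1 - z.2) * (b z.2 * v z.1)
        + ∑ j, t j * (G (z.1 - z.2) * (θ j z.2 * v z.1)) := by
    funext z
    simp only [Finset.mul_sum, Finset.sum_mul, mul_add, add_mul]
    congr 1
    exact Finset.sum_congr rfl fun j _ => by ring
  rw [h1, integral_add (intA1 hG hb2 hv), integral_finset_sum]
  · congr 1
    refine Finset.sum_congr rfl fun j _ => ?_
    rw [integral_const_mul]
  · intro j _
    exact (intA1 hG (Lp.memLp (θ j)) hv).const_mul (t j)
  · refine integrable_finset_sum _ fun j _ => (intA1 hG (Lp.memLp (θ j)) hv).const_mul (t j)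


lemma FgenPoly (hG : Integrable G μ) (a b : Lp ℝ ⊤ μ) {m n : ℕ}
    (φ : Fin m → Lp ℝ 2 μ) (θ : Fin n → Lp ℝ 2 μ) (s : Fin m → ℝ) (t : Fin n → ℝ) :
    Fgen μ G (⇑a) (⇑b) (fun x => ∑ i, s i * φ i x) (fun x => ∑ j, t j * θ j x)
      = (∫ x, conv μ G (⇑b) x * a x ∂μ)
        + (∑ j, t j * ∫ x, conv μ G (⇑(θ j)) x * a x ∂μ)
        + ∑ i, s i * ((∫ x, conv μ G (⇑b) x * φ i x ∂μ)
            + ∑ j, t j * ∫ x, conv μ G (⇑(θ j)) x * φ i x ∂μ) := by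
  have ha2 : MemLp (⇑a) 2 μ := (Lp.memLp a).mono_exponent le_top
  have hb2 : MemLp (⇑b) 2 μ := (Lp.memLp b).mono_exponent le_top
  have hU : MemLp (fun y => b y + ∑ j, t j * θ j y) 2 μ := hb2.add (memL2_sum θ t)
  have hV : MemLp (fun x => a x + ∑ i, s i * φ i x) 2 μ := ha2.add (memL2_sum φ s)
  rw [Fgen]
  rw [pairA2 hG hU hV]
  rw [pair_expand_u hG hV b θ t]
  rw [pair_expand_v hG hb2 a φ s]
  have hθ : ∀ j : Fin n,
      (∫ z : PSpace p N × PSpace p N, G (z.1 - z.2) * (θ j z.2 * (a z.1 + ∑ i, s i * φ i z.1)) ∂(μ.prod μ))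
        = (∫ z : PSpace p N × PSpace p N, G (z.1 - z.2) * (θ j z.2 * a z.1) ∂(μ.prod μ))
          + ∑ i, s i * ∫ z : PSpace p N × PSpace p N, G (z.1 - z.2) * (θ j z.2 * φ i z.1) ∂(μ.prod μ) :=
    fun j => pair_expand_v hG (Lp.memLp (θ j)) a φ s
  simp_rw [hθ]
  rw [← pairA2 hG hb2 ha2]
  have e1 : ∀ i : Fin m,
      (∫ z : PSpace p N × PSpace p N, G (z.1 - z.2) * (b z.2 * φ i z.1) ∂(μ.prod μ))
        = ∫ x, conv μ G (⇑b) x * φ i x ∂μ := fun i => (pairA2 hG hb2 (Lp.memLp (φ i))).symm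
  have e2 : ∀ j : Fin n,
      (∫ z : PSpace p N × PSpace p N, G (z.1 - z.2) * (θ j z.2 * a z.1) ∂(μ.prod μ))
        = ∫ x, conv μ G (⇑(θ j)) x * a x ∂μ := fun j => (pairA2 hG (Lp.memLp (θ j)) ha2).symm
  have e3 : ∀ i j,
      (∫ z : PSpace p N × PSpace p N, G (z.1 - z.2) * (θ j z.2 * φ i z.1) ∂(μ.prod μ))
        = ∫ x, conv μ G (⇑(θ j)) x * φ i x ∂μ :=
    fun i j => (pairA2 hG (Lp.memLp (θ j)) (Lp.memLp (φ i))).symm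
  simp_rw [e1, e2, e3]
  -- now pure algebra
  have hsw : ∑ j, t j * (∑ i, s i * ∫ x, conv μ G (⇑(θ j)) x * φ i x ∂μ)
      = ∑ i, s i * ∑ j, t j * ∫ x, conv μ G (⇑(θ j)) x * φ i x ∂μ := by
    simp_rw [Finset.mul_sum]
    rw [Finset.sum_comm]
    refine Finset.sum_congr rfl fun i _ => Finset.sum_congr rfl fun j _ => by ring
  simp only [mul_add, Finset.sum_add_distrib]
  rw [hsw]
  ring

end A

namespace Wick

variable {m n : ℕ} (c : ℝ) (α : Fin m → ℝ) (β : Fin n → ℝ) (γ : Fin m → Fin n → ℝ)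

/-- linear form in `t` attached to the `i`-th `s`-variable -/
def Lf (i : Fin m) (t : Fin n → ℝ) : ℝ := α i + ∑ j, t j * γ i j

/-- the multi-affine polynomial -/
def Pf (st : (Fin m → ℝ) × (Fin n → ℝ)) : ℝ :=
  c + (∑ j, st.2 j * β j) + ∑ i, st.1 i * Lf α γ i st.2

lemma sum_lin_update {k : ℕ} (w : Fin k → ℝ) (C : Fin k → ℝ) (i : Fin k) (r : ℝ) :
    ∑ i', Function.update w i r i' * C i'
      = (∑ i', w i' * C i') - w i * C i + r * C i := by
  rw [← Finset.add_sum_erase _ (fun i' => Function.update w i r i' * C i') (Finset.mem_univ i),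
    ← Finset.add_sum_erase _ (fun i' => w i' * C i') (Finset.mem_univ i)]
  rw [Function.update_self]
  have : ∑ i' ∈ Finset.univ.erase i, Function.update w i r i' * C i'
      = ∑ i' ∈ Finset.univ.erase i, w i' * C i' := by
    refine Finset.sum_congr rfl fun i' hi' => ?_
    rw [Function.update_of_ne (Finset.ne_of_mem_erase hi')]
  rw [this]; ring

lemma Pf_update_fst (st : (Fin m → ℝ) × (Fin n → ℝ)) (i : Fin m) (r : ℝ) :
    Pf c α β γ (Function.update st.1 i r, st.2)
      = (Pf c α β γ st - st.1 i * Lf α γ i st.2) + r * Lf α γ i st.2 := by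
  simp only [Pf]
  rw [sum_lin_update (st.1) (fun i' => Lf α γ i' st.2) i r]
  ring

lemma pdFst_form (D : (Fin n → ℝ) → ℝ) (i : Fin m) :
    pdFst i (fun st => D st.2 * Real.exp (Pf c α β γ st))
      = fun st => (D st.2 * Lf α γ i st.2) * Real.exp (Pf c α β γ st) := by
  funext st
  show deriv (fun r => D st.2 * Real.exp (Pf c α β γ (Function.update st.1 i r, st.2))) (st.1 i) = _
  set L := Lf α γ i st.2 with hL
  set K := Pf c α β γ st - st.1 i * L with hK
  have he : (fun r => D st.2 * Real.exp (Pf c α β γ (Function.update st.1 i r, st.2)))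
      = fun r => D st.2 * Real.exp (K + r * L) := by
    funext r; rw [Pf_update_fst]
  rw [he]
  have hd : HasDerivAt (fun r => D st.2 * Real.exp (K + r * L))
      (D st.2 * (Real.exp (K + st.1 i * L) * L)) (st.1 i) := by
    simpa using ((((hasDerivAt_id (st.1 i)).mul_const L).const_add K).exp).const_mul (D st.2)
  rw [hd.deriv]
  have : K + st.1 i * L = Pf c α β γ st := by rw [hK]; ring
  rw [this]; ring

lemma foldFst_form (l : List (Fin m)) : ∀ D : (Fin n → ℝ) → ℝ,
    l.foldl (fun g i => pdFst i g) (fun st => D st.2 * Real.exp (Pf c α β γ st))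
      = fun st => (D st.2 * (l.map (fun i => Lf α γ i st.2)).prod) * Real.exp (Pf c α β γ st) := by
  induction l with
  | nil => intro D; simp
  | cons i l ih =>
    intro D
    rw [List.foldl_cons, pdFst_form, ih (fun t => D t * Lf α γ i t)]
    funext st
    simp [mul_assoc]


/-! slice lemmas -/

lemma pdSnd_slice (j : Fin n) (F₁ F₂ : (Fin m → ℝ) × (Fin n → ℝ) → ℝ)
    (h : ∀ t, F₁ (0, t) = F₂ (0, t)) (t : Fin n → ℝ) :
    pdSnd j F₁ (0, t) = pdSnd j F₂ (0, t) := by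
  show deriv (fun r => F₁ (0, Function.update t j r)) (t j)
    = deriv (fun r => F₂ (0, Function.update t j r)) (t j)
  congr 1
  funext r
  exact h _

lemma foldSnd_slice (l : List (Fin n)) : ∀ (F₁ F₂ : (Fin m → ℝ) × (Fin n → ℝ) → ℝ),
    (∀ t, F₁ (0, t) = F₂ (0, t)) →
    ∀ t, (l.foldl (fun g j => pdSnd j g) F₁) (0, t) = (l.foldl (fun g j => pdSnd j g) F₂) (0, t) := by
  induction l with
  | nil => intro F₁ F₂ h t; exact h t
  | cons j l ih =>
    intro F₁ F₂ h t
    exact ih (pdSnd j F₁) (pdSnd j F₂) (pdSnd_slice j F₁ F₂ h) t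

/-- derivative in the `j`-th coordinate, for functions of `t` only. -/
noncomputable def pdT (j : Fin n) (g : (Fin n → ℝ) → ℝ) : (Fin n → ℝ) → ℝ :=
  fun t => deriv (fun r => g (Function.update t j r)) (t j)

lemma foldSnd_t_only (l : List (Fin n)) : ∀ g : (Fin n → ℝ) → ℝ,
    l.foldl (fun G j => pdSnd j G) (fun st : (Fin m → ℝ) × (Fin n → ℝ) => g st.2)
      = fun st => (l.foldl (fun g j => pdT j g) g) st.2 := by
  induction l with
  | nil => intro g; rfl
  | cons j l ih =>
    intro g
    rw [List.foldl_cons, List.foldl_cons]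
    exact ih (pdT j g)

/-! the `t`-only building blocks -/

def QT (t : Fin n → ℝ) : ℝ := c + ∑ j, t j * β j

def eF (S : Finset (Fin m)) (t : Fin n → ℝ) : ℝ := (∏ i ∈ S, Lf α γ i t) * Real.exp (QT c β t)

lemma Lf_update (i : Fin m) (t : Fin n → ℝ) (j : Fin n) (r : ℝ) :
    Lf α γ i (Function.update t j r) = (Lf α γ i t - t j * γ i j) + r * γ i j := by
  simp only [Lf]
  rw [sum_lin_update t (fun j' => γ i j') j r]
  ring

lemma QT_update (t : Fin n → ℝ) (j : Fin n) (r : ℝ) :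
    QT c β (Function.update t j r) = (QT c β t - t j * β j) + r * β j := by
  simp only [QT]
  rw [sum_lin_update t (fun j' => β j') j r]
  ring

lemma eF_hasDeriv (S : Finset (Fin m)) (j : Fin n) (t : Fin n → ℝ) :
    HasDerivAt (fun r => eF c α β γ S (Function.update t j r))
      (β j * eF c α β γ S t + ∑ i ∈ S, γ i j * eF c α β γ (S.erase i) t) (t j) := by
  have he : (fun r => eF c α β γ S (Function.update t j r))
      = fun r => (∏ i ∈ S, ((Lf α γ i t - t j * γ i j) + r * γ i j)) *
          Real.exp ((QT c β t - t j * β j) + r * β j) := by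
    funext r
    simp only [eF]
    congr 1
    · exact Finset.prod_congr rfl fun i _ => Lf_update α γ i t j r
    · rw [QT_update]
  rw [he]
  have hprod : HasDerivAt (fun r => ∏ i ∈ S, ((Lf α γ i t - t j * γ i j) + r * γ i j))
      (∑ i ∈ S, (∏ i' ∈ S.erase i, ((Lf α γ i' t - t j * γ i' j) + t j * γ i' j)) • γ i j)
      (t j) := by
    refine HasDerivAt.fun_finsetProd fun i _ => ?_
    simpa using ((hasDerivAt_id (t j)).mul_const (γ i j)).const_add (Lf α γ i t - t j * γ i j)
  have hexp : HasDerivAt (fun r => Real.exp ((QT c β t - t j * β j) + r * β j))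
      (Real.exp ((QT c β t - t j * β j) + t j * β j) * β j) (t j) := by
    simpa using (((hasDerivAt_id (t j)).mul_const (β j)).const_add (QT c β t - t j * β j)).exp
  have h := hprod.fun_mul hexp
  have hsimp : ∀ i : Fin m, (Lf α γ i t - t j * γ i j) + t j * γ i j = Lf α γ i t := fun i => by ring
  have hQ : (QT c β t - t j * β j) + t j * β j = QT c β t := by ring
  simp only [hsimp, hQ, smul_eq_mul] at h
  refine h.congr_deriv ?_
  symm
  simp only [eF, Finset.sum_mul, Finset.mul_sum]
  rw [add_comm]
  congr 1
  · exact Finset.sum_congr rfl fun i _ => by ring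
  · ring

lemma pdT_sum {κ : Type*} [Fintype κ] (co : κ → ℝ) (SS : κ → Finset (Fin m)) (j : Fin n) :
    pdT j (fun t => ∑ k, co k * eF c α β γ (SS k) t)
      = fun t => ∑ k, co k * (β j * eF c α β γ (SS k) t
          + ∑ i ∈ SS k, γ i j * eF c α β γ ((SS k).erase i) t) := by
  funext t
  have H : HasDerivAt (fun r => ∑ k, co k * eF c α β γ (SS k) (Function.update t j r))
      (∑ k, co k * (β j * eF c α β γ (SS k) t
        + ∑ i ∈ SS k, γ i j * eF c α β γ ((SS k).erase i) t)) (t j) :=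
    HasDerivAt.fun_sum fun k _ => (eF_hasDeriv c α β γ (SS k) j t).const_mul (co k)
  exact H.deriv


/-! history bookkeeping -/

def wOpt (j : Fin n) (o : Option (Fin m)) : ℝ := o.elim (β j) (fun i => γ i j)

def wgt (l : List (Fin n)) (h : Fin n → Option (Fin m)) : ℝ :=
  ∏ j ∈ l.toFinset, wOpt β γ j (h j)

def sImg (h : Fin n → Option (Fin m)) : Finset (Fin m) :=
  Finset.univ.filter (fun i => ∃ j, h j = some i)

def okH (h : Fin n → Option (Fin m)) : Prop :=
  ∀ j j' : Fin n, ∀ i : Fin m, h j = some i → h j' = some i → j = j'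

instance : DecidablePred (okH (m := m) (n := n)) := fun _ => by unfold okH; infer_instance

def suppH (l : List (Fin n)) (h : Fin n → Option (Fin m)) : Prop :=
  ∀ j : Fin n, j ∉ l → h j = none

instance (l : List (Fin n)) : DecidablePred (suppH (m := m) l) := fun _ => by
  unfold suppH; infer_instance

variable {β γ}

lemma sImg_update_none {h : Fin n → Option (Fin m)} {j₀ : Fin n} (h0 : h j₀ = none) :
    sImg (Function.update h j₀ none) = sImg (h : Fin n → Option (Fin m)) := by
  rw [show Function.update h j₀ none = h from by rw [← h0]; exact Function.update_eq_self j₀ h]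

lemma sImg_update_some {h : Fin n → Option (Fin m)} {j₀ : Fin n} (h0 : h j₀ = none) (i : Fin m) :
    sImg (Function.update h j₀ (some i)) = insert i (sImg h) := by
  ext i'
  simp only [sImg, Finset.mem_filter, Finset.mem_univ, true_and, Finset.mem_insert]
  constructor
  · rintro ⟨j, hj⟩
    by_cases hjj : j = j₀
    · subst hjj
      rw [Function.update_self] at hj
      left; exact (Option.some_inj.mp hj).symm
    · rw [Function.update_of_ne hjj] at hj
      right; exact ⟨j, hj⟩
  · rintro (rfl | ⟨j, hj⟩)
    · exact ⟨j₀, by rw [Function.update_self]⟩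
    · refine ⟨j, ?_⟩
      have hjj : j ≠ j₀ := fun e => by rw [e, h0] at hj; exact absurd hj.symm (Option.some_ne_none _)
      rw [Function.update_of_ne hjj]; exact hj

lemma okH_update_none {h : Fin n → Option (Fin m)} {j₀ : Fin n} (h0 : h j₀ = none) :
    okH (Function.update h j₀ none) ↔ okH h := by
  rw [show Function.update h j₀ none = h from by rw [← h0]; exact Function.update_eq_self j₀ h]

lemma okH_update_some {h : Fin n → Option (Fin m)} {j₀ : Fin n} (h0 : h j₀ = none) (i : Fin m) :
    okH (Function.update h j₀ (some i)) ↔ okH h ∧ i ∉ sImg h := by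
  constructor
  · intro hok
    constructor
    · intro j j' i' hj hj'
      have hjj : j ≠ j₀ := fun e => by rw [e, h0] at hj; exact absurd hj.symm (Option.some_ne_none _)
      have hjj' : j' ≠ j₀ := fun e => by rw [e, h0] at hj'; exact absurd hj'.symm (Option.some_ne_none _)
      exact hok j j' i' (by rwa [Function.update_of_ne hjj]) (by rwa [Function.update_of_ne hjj'])
    · intro hi
      simp only [sImg, Finset.mem_filter, Finset.mem_univ, true_and] at hi
      obtain ⟨j, hj⟩ := hi
      have hjj : j ≠ j₀ := fun e => by rw [e, h0] at hj; exact absurd hj.symm (Option.some_ne_none _)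
      have := hok j j₀ i (by rwa [Function.update_of_ne hjj]) (by rw [Function.update_self])
      exact hjj this
  · rintro ⟨hok, hi⟩ j j' i' hj hj'
    simp only [sImg, Finset.mem_filter, Finset.mem_univ, true_and, not_exists] at hi
    by_cases hjj : j = j₀ <;> by_cases hjj' : j' = j₀
    · rw [hjj, hjj']
    · exfalso
      subst hjj
      rw [Function.update_self] at hj
      rw [Function.update_of_ne hjj'] at hj'
      refine hi j' ?_
      rw [Option.some_inj.mp hj]; exact hj'
    · exfalso
      subst hjj'
      rw [Function.update_self] at hj'
      rw [Function.update_of_ne hjj] at hj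
      refine hi j ?_
      rw [Option.some_inj.mp hj']; exact hj
    · rw [Function.update_of_ne hjj] at hj
      rw [Function.update_of_ne hjj'] at hj'
      exact hok j j' i' hj hj'

lemma suppH_update {h : Fin n → Option (Fin m)} {j₀ : Fin n} {l : List (Fin n)}
    (h0 : h j₀ = none) (hj0 : j₀ ∉ l) (o : Option (Fin m)) :
    suppH (l ++ [j₀]) (Function.update h j₀ o) ↔ suppH l h := by
  constructor
  · intro hs j hj
    by_cases hjj : j = j₀
    · rw [hjj]; exact h0
    · have := hs j (by simp [hj, hjj])
      rwa [Function.update_of_ne hjj] at this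
  · intro hs j hj
    simp only [List.mem_append, List.mem_singleton, not_or] at hj
    rw [Function.update_of_ne hj.2]
    exact hs j hj.1

lemma wgt_update {h : Fin n → Option (Fin m)} {j₀ : Fin n} {l : List (Fin n)}
    (hj0 : j₀ ∉ l) (o : Option (Fin m)) :
    wgt β γ (l ++ [j₀]) (Function.update h j₀ o) = wOpt β γ j₀ o * wgt β γ l h := by
  have ht : (l ++ [j₀]).toFinset = insert j₀ l.toFinset := by
    ext j; simp [or_comm]
  rw [wgt, ht, Finset.prod_insert (by simpa using hj0), Function.update_self]
  congr 1
  refine Finset.prod_congr rfl fun j hj => ?_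
  rw [Function.update_of_ne (by rintro rfl; exact hj0 (List.mem_toFinset.mp hj))]

variable (β γ)

/-- splitting a sum over `h` by the value at `j₀` -/
lemma sum_split (j₀ : Fin n) (f : (Fin n → Option (Fin m)) → ℝ) :
    ∑ h : Fin n → Option (Fin m), f h
      = ∑ h ∈ Finset.univ.filter (fun h : Fin n → Option (Fin m) => h j₀ = none),
          ∑ o : Option (Fin m), f (Function.update h j₀ o) := by
  have step1 : ∑ h : Fin n → Option (Fin m), f h
      = ∑ q ∈ (Finset.univ.filter (fun h : Fin n → Option (Fin m) => h j₀ = none)) ×ˢ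
          (Finset.univ : Finset (Option (Fin m))), f (Function.update q.1 j₀ q.2) := by
    refine (Finset.sum_nbij' (i := fun q => Function.update q.1 j₀ q.2)
      (j := fun h' => (Function.update h' j₀ none, h' j₀)) ?_ ?_ ?_ ?_ ?_).symm
    · intro q _
      exact Finset.mem_univ _
    · intro h' _
      simp [Finset.mem_product, Function.update_self]
    · intro q hq
      simp only [Finset.mem_product, Finset.mem_filter, Finset.mem_univ, true_and] at hq
      ext : 1
      · funext j
        by_cases hj : j = j₀
        · subst hj; simp [hq.1]
        · simp [Function.update_of_ne hj]
      · simp [Function.update_self]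
    · intro h' _
      simp [Function.update_idem, Function.update_eq_self]
    · intro q hq
      rfl
  rw [step1, Finset.sum_product]

lemma fold_rep (c : ℝ) (α : Fin m → ℝ) : ∀ (l : List (Fin n)), l.Nodup →
    l.foldl (fun g j => pdT j g) (eF c α β γ Finset.univ)
      = fun t => ∑ h : Fin n → Option (Fin m),
          (if suppH l h ∧ okH h then wgt β γ l h else 0)
            * eF c α β γ (Finset.univ \ sImg h) t := by
  intro l
  induction l using List.reverseRecOn with
  | nil =>
    intro _
    funext t
    rw [Fintype.sum_eq_single (fun _ : Fin n => (none : Option (Fin m)))]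
    · have hsupp : suppH ([] : List (Fin n)) (fun _ : Fin n => (none : Option (Fin m))) :=
        fun j _ => rfl
      have hok : okH (fun _ : Fin n => (none : Option (Fin m))) := by
        intro j j' i hj
        exact absurd hj.symm (Option.some_ne_none _)
      rw [if_pos ⟨hsupp, hok⟩]
      have h1 : wgt β γ ([] : List (Fin n)) (fun _ => none) = 1 := by
        simp [wgt]
      have h2 : sImg (fun _ : Fin n => (none : Option (Fin m))) = ∅ := by
        simp [sImg]
      rw [h1, h2, one_mul, Finset.sdiff_empty]
      rfl
    · intro h hne
      rw [if_neg, zero_mul]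
      rintro ⟨hsupp, -⟩
      exact hne (funext fun j => hsupp j List.not_mem_nil)
  | append_singleton l j₀ ih =>
    intro hnd
    rw [List.nodup_append] at hnd
    have hndl : l.Nodup := hnd.1
    have hj0 : j₀ ∉ l := fun hmem => hnd.2.2 j₀ hmem j₀ (by simp) rfl
    rw [List.foldl_append, ih hndl]
    rw [List.foldl_cons, List.foldl_nil]
    rw [pdT_sum c α β γ (κ := Fin n → Option (Fin m))
      (co := fun h => if suppH l h ∧ okH h then wgt β γ l h else 0)
      (SS := fun h => Finset.univ \ sImg h) j₀]
    funext t
    have hLHS : ∑ h : Fin n → Option (Fin m),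
        (if suppH l h ∧ okH h then wgt β γ l h else 0)
          * (β j₀ * eF c α β γ (Finset.univ \ sImg h) t
            + ∑ i ∈ Finset.univ \ sImg h, γ i j₀ * eF c α β γ ((Finset.univ \ sImg h).erase i) t)
        = ∑ h ∈ Finset.univ.filter (fun h : Fin n → Option (Fin m) => h j₀ = none),
          (if suppH l h ∧ okH h then wgt β γ l h else 0)
            * (β j₀ * eF c α β γ (Finset.univ \ sImg h) t
              + ∑ i ∈ Finset.univ \ sImg h, γ i j₀ * eF c α β γ ((Finset.univ \ sImg h).erase i) t) := by
      refine (Finset.sum_subset (Finset.filter_subset _ _) fun h _ hmem => ?_).symm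
      rw [if_neg, zero_mul]
      rintro ⟨hsupp, -⟩
      simp only [Finset.mem_filter, Finset.mem_univ, true_and] at hmem
      exact hmem (hsupp j₀ hj0)
    rw [hLHS]
    conv_rhs => rw [sum_split j₀]
    refine Finset.sum_congr rfl fun h hmem => ?_
    simp only [Finset.mem_filter, Finset.mem_univ, true_and] at hmem
    -- hmem : h j₀ = none
    rw [Fintype.sum_option]
    by_cases hcase : suppH l h ∧ okH h
    · obtain ⟨hsupp, hok⟩ := hcase
      have e_none : Function.update h j₀ (none : Option (Fin m)) = h := by
        rw [← hmem]; exact Function.update_eq_self j₀ h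
      -- none term
      have tnone : (if suppH (l ++ [j₀]) (Function.update h j₀ (none : Option (Fin m)))
            ∧ okH (Function.update h j₀ (none : Option (Fin m))) then
            wgt β γ (l ++ [j₀]) (Function.update h j₀ none) else 0)
          * eF c α β γ (Finset.univ \ sImg (Function.update h j₀ (none : Option (Fin m)))) t
          = (if suppH l h ∧ okH h then wgt β γ l h else 0)
            * (β j₀ * eF c α β γ (Finset.univ \ sImg h) t) := by
        have hsupp' : suppH (l ++ [j₀]) h := by
          intro j hj
          simp only [List.mem_append, List.mem_singleton, not_or] at hj
          exact hsupp j hj.1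
        rw [wgt_update hj0, e_none]
        rw [if_pos ⟨hsupp', hok⟩, if_pos ⟨hsupp, hok⟩]
        show wOpt β γ j₀ none * wgt β γ l h * eF c α β γ (Finset.univ \ sImg h) t = _
        rw [show wOpt β γ j₀ none = β j₀ from rfl]
        ring
      rw [tnone]
      -- some terms
      have tsome : ∀ i : Fin m,
          (if suppH (l ++ [j₀]) (Function.update h j₀ (some i))
              ∧ okH (Function.update h j₀ (some i)) then
              wgt β γ (l ++ [j₀]) (Function.update h j₀ (some i)) else 0)
            * eF c α β γ (Finset.univ \ sImg (Function.update h j₀ (some i))) t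
          = (if i ∈ Finset.univ \ sImg h then
              wgt β γ l h * (γ i j₀ * eF c α β γ ((Finset.univ \ sImg h).erase i) t) else 0) := by
        intro i
        rw [wgt_update hj0, sImg_update_some hmem i]
        have hset : Finset.univ \ insert i (sImg h) = (Finset.univ \ sImg h).erase i := by
          ext i'
          simp [Finset.mem_sdiff, Finset.mem_insert, Finset.mem_erase, not_or, and_comm]
        rw [hset]
        by_cases hi : i ∈ sImg h
        · have hc1 : ¬(suppH (l ++ [j₀]) (Function.update h j₀ (some i))
              ∧ okH (Function.update h j₀ (some i))) := by
            rintro ⟨-, hok'⟩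
            exact ((okH_update_some hmem i).mp hok').2 hi
          rw [if_neg hc1, if_neg (by simp [hi]), zero_mul]
        · have hc1 : suppH (l ++ [j₀]) (Function.update h j₀ (some i))
              ∧ okH (Function.update h j₀ (some i)) :=
            ⟨(suppH_update hmem hj0 (some i)).mpr hsupp,
              (okH_update_some hmem i).mpr ⟨hok, hi⟩⟩
          rw [if_pos hc1, if_pos (by simp [hi])]
          show wOpt β γ j₀ (some i) * wgt β γ l h * _ = _
          rw [show wOpt β γ j₀ (some i) = γ i j₀ from rfl]
          ring
      rw [Finset.sum_congr rfl (fun i _ => tsome i)]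
      rw [if_pos ⟨hsupp, hok⟩]
      rw [Finset.sum_ite_mem, Finset.univ_inter]
      rw [mul_add, Finset.mul_sum]
    · rw [if_neg hcase, zero_mul]
      have kill : ∀ o : Option (Fin m),
          (if suppH (l ++ [j₀]) (Function.update h j₀ o) ∧ okH (Function.update h j₀ o) then
              wgt β γ (l ++ [j₀]) (Function.update h j₀ o) else 0)
            * eF c α β γ (Finset.univ \ sImg (Function.update h j₀ o)) t = 0 := by
        intro o
        rw [if_neg, zero_mul]
        rintro ⟨hsupp', hok'⟩
        refine hcase ⟨(suppH_update hmem hj0 o).mp hsupp', ?_⟩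
        cases o with
        | none =>
          rwa [okH_update_none hmem] at hok'
        | some i =>
          exact ((okH_update_some hmem i).mp hok').1
      rw [kill none, Finset.sum_congr rfl (fun i _ => kill (some i))]
      simp

lemma eF_zero (c : ℝ) (α : Fin m → ℝ) (S : Finset (Fin m)) :
    eF c α β γ S 0 = (∏ i ∈ S, α i) * Real.exp c := by
  simp [eF, Lf, QT]

/-- encoding of a pair (A, σ) as a history -/
def enc (A : Finset (Fin n)) (σ : ((Aᶜ : Finset (Fin n)) : Type) ↪ Fin m) :
    Fin n → Option (Fin m) :=
  fun j => if hj : j ∈ (Aᶜ : Finset (Fin n)) then some (σ ⟨j, hj⟩) else none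


def decodeFun (A : Finset (Fin n)) (h : Fin n → Option (Fin m))
    (hP : ∀ j, h j = none ↔ j ∈ A) : ((Aᶜ : Finset (Fin n)) : Type) → Fin m :=
  fun jj => (h jj.1).get (by
    rw [← Option.ne_none_iff_isSome]
    intro e
    have hnotA : jj.1 ∉ A := by
      have := jj.2
      simp only [Finset.mem_compl] at this
      exact this
    exact hnotA ((hP jj.1).mp e))

lemma decodeFun_some (A : Finset (Fin n)) (h : Fin n → Option (Fin m))
    (hP : ∀ j, h j = none ↔ j ∈ A) (jj : ((Aᶜ : Finset (Fin n)) : Type)) :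
    h jj.1 = some (decodeFun A h hP jj) := by
  unfold decodeFun
  exact (Option.some_get _).symm

def decode (A : Finset (Fin n)) (h : Fin n → Option (Fin m))
    (hP : ∀ j, h j = none ↔ j ∈ A) (hok : okH h) :
    ((Aᶜ : Finset (Fin n)) : Type) ↪ Fin m :=
  ⟨decodeFun A h hP, by
    intro jj jj' he
    apply Subtype.ext
    refine hok _ _ _ (decodeFun_some A h hP jj) ?_
    have h2 := decodeFun_some A h hP jj'
    rw [← he] at h2
    exact h2⟩

lemma step2 (α : Fin m → ℝ) (A : Finset (Fin n)) :
    ∑ h ∈ Finset.univ.filter (fun h : Fin n → Option (Fin m) =>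
        (Finset.univ.filter (fun j => h j = none) = A) ∧ okH h),
      ((∏ j, wOpt β γ j (h j)) * ∏ i ∈ Finset.univ \ sImg h, α i)
    = ∑ σ : ((Aᶜ : Finset (Fin n)) ↪ Fin m),
        (∏ j ∈ A, β j) * (∏ j : (Aᶜ : Finset (Fin n)), γ (σ j) j.1)
          * ∏ i ∈ Finset.univ \ Finset.univ.map σ, α i := by
  classical
  have hPdec : ∀ (h : Fin n → Option (Fin m)),
      (Finset.univ.filter (fun j => h j = none) = A) → ∀ j, (h j = none ↔ j ∈ A) := by
    intro h hP j
    rw [← hP]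
    simp
  refine (Finset.sum_bij' (i := fun (σ : ((Aᶜ : Finset (Fin n)) ↪ Fin m)) _ => enc A σ)
    (j := fun h hh => decode A h
      (hPdec h (Finset.mem_filter.mp hh).2.1) (Finset.mem_filter.mp hh).2.2)
    ?_ ?_ ?_ ?_ ?_).symm
  -- hi : enc lands in the filter
  · intro σ _
    rw [Finset.mem_filter]
    refine ⟨Finset.mem_univ _, ?_, ?_⟩
    · ext j
      rw [Finset.mem_filter]; simp only [Finset.mem_univ, true_and, enc]
      by_cases hj : j ∈ (Aᶜ : Finset (Fin n))
      · rw [dif_pos hj]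
        simp only [Finset.mem_compl] at hj
        constructor
        · intro e; exact absurd e (Option.some_ne_none _)
        · intro hA; exact absurd hA hj
      · rw [dif_neg hj]
        simp only [Finset.mem_compl, not_not] at hj
        simp [hj]
    · intro j j' i hj hj'
      simp only [enc] at hj hj'
      by_cases h1 : j ∈ (Aᶜ : Finset (Fin n))
      · by_cases h2 : j' ∈ (Aᶜ : Finset (Fin n))
        · rw [dif_pos h1] at hj
          rw [dif_pos h2] at hj'
          have : σ ⟨j, h1⟩ = σ ⟨j', h2⟩ := by
            rw [Option.some_inj.mp hj, Option.some_inj.mp hj']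
          have := σ.injective this
          exact congrArg Subtype.val this
        · rw [dif_neg h2] at hj'; exact absurd hj'.symm (Option.some_ne_none _)
      · rw [dif_neg h1] at hj; exact absurd hj.symm (Option.some_ne_none _)
  -- hj : decode lands in univ
  · intro h hh
    exact Finset.mem_univ _
  -- left inverse : decode (enc σ) = σ
  · intro σ hσ
    apply DFunLike.ext
    rintro ⟨j, hj⟩
    apply Option.some_injective
    simp only [decode, Function.Embedding.coeFn_mk]
    show some (decodeFun A (enc A σ) (fun j' => by unfold enc; by_cases h' : j' ∈ A <;> simp [h']) ⟨j, hj⟩) = _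
    rw [← decodeFun_some]
    exact dif_pos hj
  -- right inverse : enc (decode h) = h
  · intro h hh
    obtain ⟨-, hP, hok⟩ := Finset.mem_filter.mp hh
    funext j
    simp only [enc]
    by_cases hj : j ∈ (Aᶜ : Finset (Fin n))
    · rw [dif_pos hj]
      exact (decodeFun_some A h (hPdec h hP) ⟨j, hj⟩).symm
    · rw [dif_neg hj]
      simp only [Finset.mem_compl, not_not] at hj
      exact ((hPdec h hP j).mpr hj).symm
  -- weights agree
  · intro σ _
    have himg : sImg (enc A σ) = Finset.univ.map σ := by
      ext i
      simp only [sImg, Finset.mem_filter, Finset.mem_univ, true_and]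
      rw [Finset.mem_map]
      constructor
      · rintro ⟨j, hj⟩
        by_cases h1 : j ∈ (Aᶜ : Finset (Fin n))
        · refine ⟨⟨j, h1⟩, Finset.mem_univ _, ?_⟩
          have he : enc A σ j = some (σ ⟨j, h1⟩) := dif_pos h1
          rw [he] at hj
          exact Option.some_inj.mp hj
        · have he : enc A σ j = none := dif_neg h1
          rw [he] at hj; exact absurd hj.symm (Option.some_ne_none _)
      · rintro ⟨jj, -, hjj⟩
        refine ⟨jj.1, ?_⟩
        have he : enc A σ jj.1 = some (σ ⟨jj.1, jj.2⟩) := dif_pos jj.2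
        rw [he]
        exact congrArg some hjj
    have hw : ∏ j, wOpt β γ j (enc A σ j)
        = (∏ j ∈ A, β j) * ∏ j : (Aᶜ : Finset (Fin n)), γ (σ j) j.1 := by
      rw [← Finset.prod_mul_prod_compl A (fun j => wOpt β γ j (enc A σ j))]
      congr 1
      · refine Finset.prod_congr rfl fun j hj => ?_
        have he : enc A σ j = none := dif_neg (by simpa using hj)
        rw [he]; rfl
      · rw [Finset.univ_eq_attach, ← Finset.prod_attach (Aᶜ) (fun j => wOpt β γ j (enc A σ j))]
        refine Finset.prod_congr rfl fun jj _ => ?_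
        have he : enc A σ jj.1 = some (σ jj) := by
          rw [enc]
          exact dif_pos jj.2
        rw [he]
        rfl
    rw [← himg, ← hw]

lemma bridge (α : Fin m → ℝ) :
    ∑ h : Fin n → Option (Fin m),
      (if okH h then (∏ j, wOpt β γ j (h j)) * ∏ i ∈ Finset.univ \ sImg h, α i else 0)
    = ∑ A : Finset (Fin n), ∑ σ : ((Aᶜ : Finset (Fin n)) ↪ Fin m),
        (∏ j ∈ A, β j) * (∏ j : (Aᶜ : Finset (Fin n)), γ (σ j) j.1)
          * ∏ i ∈ Finset.univ \ Finset.univ.map σ, α i := by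
  classical
  have step1 : ∑ h : Fin n → Option (Fin m),
      (if okH h then (∏ j, wOpt β γ j (h j)) * ∏ i ∈ Finset.univ \ sImg h, α i else 0)
      = ∑ A : Finset (Fin n), ∑ h ∈ Finset.univ.filter
          (fun h : Fin n → Option (Fin m) =>
            Finset.univ.filter (fun j => h j = none) = A),
          (if okH h then (∏ j, wOpt β γ j (h j)) * ∏ i ∈ Finset.univ \ sImg h, α i else 0) :=
    (Finset.sum_fiberwise _ _ _).symm
  rw [step1]
  refine Finset.sum_congr rfl fun A _ => ?_
  rw [← Finset.sum_filter, Finset.filter_filter]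
  exact step2 (β := β) (γ := γ) (α := α) A

theorem comboMain (c : ℝ) (α : Fin m → ℝ) :
    iterPD2 (fun st : (Fin m → ℝ) × (Fin n → ℝ) => Real.exp (Pf c α β γ st)) (0, 0)
      = Real.exp c * ∑ A : Finset (Fin n), ∑ σ : ((Aᶜ : Finset (Fin n)) ↪ Fin m),
          (∏ j ∈ A, β j) * (∏ j : (Aᶜ : Finset (Fin n)), γ (σ j) j.1)
            * ∏ i ∈ Finset.univ \ Finset.univ.map σ, α i := by
  classical
  rw [iterPD2]
  have h0 : (fun st : (Fin m → ℝ) × (Fin n → ℝ) => Real.exp (Pf c α β γ st))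
      = fun st => (fun _ : Fin n → ℝ => (1:ℝ)) st.2 * Real.exp (Pf c α β γ st) := by
    funext st; rw [one_mul]
  rw [h0, foldFst_form c α β γ (List.finRange m) (fun _ : Fin n → ℝ => (1:ℝ))]
  have hslice : ∀ t : Fin n → ℝ,
      (1:ℝ) * ((List.finRange m).map (fun i => Lf α γ i ((0 : Fin m → ℝ), t).2)).prod
        * Real.exp (Pf c α β γ ((0 : Fin m → ℝ), t))
      = (fun st : (Fin m → ℝ) × (Fin n → ℝ) => eF c α β γ Finset.univ st.2)
          ((0 : Fin m → ℝ), t) := by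
    intro t
    show (1 * ((List.finRange m).map (fun i => Lf α γ i t)).prod)
        * Real.exp (Pf c α β γ (0, t)) = eF c α β γ Finset.univ t
    have h1 : Pf c α β γ ((0 : Fin m → ℝ), t) = QT c β t := by
      simp [Pf, QT]
    rw [h1, one_mul, eF, ← Fin.prod_univ_def]
  rw [foldSnd_slice (List.finRange n) _ (fun st : (Fin m → ℝ) × (Fin n → ℝ) => eF c α β γ Finset.univ st.2) hslice 0]
  rw [foldSnd_t_only]
  show (List.foldl (fun g j => pdT j g) (eF c α β γ Finset.univ) (List.finRange n)) 0 = _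
  rw [fold_rep β γ c α (List.finRange n) (List.nodup_finRange n)]
  have hs : ∀ h : Fin n → Option (Fin m), suppH (List.finRange n) h :=
    fun h j hj => absurd (List.mem_finRange j) hj
  have htf : (List.finRange n).toFinset = (Finset.univ : Finset (Fin n)) := by
    ext j; simp [List.mem_finRange]
  have key : ∀ h : Fin n → Option (Fin m),
      (if suppH (List.finRange n) h ∧ okH h then wgt β γ (List.finRange n) h else 0)
        * eF c α β γ (Finset.univ \ sImg h) 0
      = Real.exp c * (if okH h then (∏ j, wOpt β γ j (h j))
          * ∏ i ∈ Finset.univ \ sImg h, α i else 0) := by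
    intro h
    rw [eF_zero]
    have hw : wgt β γ (List.finRange n) h = ∏ j, wOpt β γ j (h j) := by
      rw [wgt, htf]
    by_cases hok : okH h
    · rw [if_pos ⟨hs h, hok⟩, if_pos hok, hw]; ring
    · rw [if_neg (fun hc => hok hc.2), if_neg hok]; ring
  show (∑ h : Fin n → Option (Fin m),
      (if suppH (List.finRange n) h ∧ okH h then wgt β γ (List.finRange n) h else 0)
        * eF c α β γ (Finset.univ \ sImg h) (0 : Fin n → ℝ)) = _
  rw [Finset.sum_congr rfl (fun h _ => key h), ← Finset.mul_sum]
  rw [bridge (β := β) (γ := γ) α]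

end Wick

/-- Wick-type 3-partition formula:
`∂_{t_n}⋯∂_{t_1}∂_{s_m}⋯∂_{s_1} exp F(Σ s_i φ_i, Σ t_j θ_j) |_{(s,t)=(0,0)}` equals
`exp(⟨G∗b, a⟩)` times the sum, over all subsets `A ⊆ {1,…,n}` and injections
`σ : {1,…,n} \ A → {1,…,m}`, of
`∏_{j∈A} ⟨G∗θ_j, a⟩ · ∏_{j∉A} ⟨G∗θ_j, φ_{σ(j)}⟩ · ∏_{i ∉ range σ} ⟨G∗b, φ_i⟩`. -/
theorem stmt11 {p : ℕ} [Fact p.Prime] {N : ℕ} (hN : 1 ≤ N)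
    [MeasurableSpace (PSpace p N)] [BorelSpace (PSpace p N)]
    (μ : Measure (PSpace p N)) [IsProbabilityMeasure μ] [μ.IsAddLeftInvariant]
    (G : PSpace p N → ℝ) (hG : Integrable G μ) (a b : Lp ℝ ⊤ μ)
    (m n : ℕ) (φ : Fin m → Lp ℝ 2 μ) (θ : Fin n → Lp ℝ 2 μ) :
    iterPD2 (fun st : (Fin m → ℝ) × (Fin n → ℝ) =>
        Real.exp (Fgen μ G (⇑a) (⇑b)
          (fun x => ∑ i, st.1 i * φ i x) (fun x => ∑ j, st.2 j * θ j x))) (0, 0)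
      = Real.exp (∫ x, conv μ G (⇑b) x * a x ∂μ) *
          ∑ A : Finset (Fin n), ∑ σ : ((Aᶜ : Finset (Fin n)) ↪ Fin m),
            (∏ j ∈ A, ∫ x, conv μ G (⇑(θ j)) x * a x ∂μ) *
              (∏ j : (Aᶜ : Finset (Fin n)), ∫ x, conv μ G (⇑(θ j.1)) x * φ (σ j) x ∂μ) *
                ∏ i ∈ Finset.univ \ Finset.univ.map σ,
                  ∫ x, conv μ G (⇑b) x * φ i x ∂μ := by
  have hfun : (fun st : (Fin m → ℝ) × (Fin n → ℝ) =>
      Real.exp (Fgen μ G (⇑a) (⇑b)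
        (fun x => ∑ i, st.1 i * φ i x) (fun x => ∑ j, st.2 j * θ j x)))
      = fun st => Real.exp (Wick.Pf (∫ x, conv μ G (⇑b) x * a x ∂μ)
          (fun i => ∫ x, conv μ G (⇑b) x * φ i x ∂μ)
          (fun j => ∫ x, conv μ G (⇑(θ j)) x * a x ∂μ)
          (fun i j => ∫ x, conv μ G (⇑(θ j)) x * φ i x ∂μ) st) := by
    funext st
    rw [FgenPoly hG a b φ θ st.1 st.2]
    rfl
  rw [hfun]
  rw [Wick.comboMain (β := fun j => ∫ x, conv μ G (⇑(θ j)) x * a x ∂μ)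
      (γ := fun i j => ∫ x, conv μ G (⇑(θ j)) x * φ i x ∂μ)
      (∫ x, conv μ G (⇑b) x * a x ∂μ)
      (fun i => ∫ x, conv μ G (⇑b) x * φ i x ∂μ)]

end
end
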